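/- arXiv:2405.21043 — 6 statements merged into one kernel-verified Lean document; each statement's English description precedes it below -/
import Mathlib

section
/- Let M be a k×d real matrix of full row rank, D a positive diagonal k×k matrix, η > 0 with η ρ(M Mᵀ D) < 1, W a k×k real matrix with ‖W‖ ≤ 1 for some sub-multiplicative matrix norm ‖·‖, and 0 ≤ γ < 1. Then there exists an integer m̄ such that for all m ≥ m̄, the spectral radius of γW + (I − γW)(I − η M Mᵀ D)^m is strictly smaller than 1. -/
open Matrix Filter Topology

noncomputable def specRad {n : Type*} [Fintype n] [DecidableEq n] (A : Matrix n n ℝ) : ℝ :=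
  sSup ((fun z : ℂ => ‖z‖) '' spectrum ℂ (A.map fun x => (x : ℂ)))

namespace StmtAux

attribute [local instance] Matrix.linftyOpNormedRing Matrix.linftyOpNormedAlgebra

variable {k : ℕ}

noncomputable abbrev cplx {k : ℕ} (X : Matrix (Fin k) (Fin k) ℝ) : Matrix (Fin k) (Fin k) ℂ :=
  Complex.ofRealHom.mapMatrix X

lemma cplx_eq (X : Matrix (Fin k) (Fin k) ℝ) : cplx X = X.map fun x => (x : ℂ) := rfl

lemma specRad_eq (X : Matrix (Fin k) (Fin k) ℝ) :
    specRad X = sSup ((fun z : ℂ => ‖z‖) '' spectrum ℂ (cplx X)) := rfl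

lemma norm_cplx (X : Matrix (Fin k) (Fin k) ℝ) : ‖cplx X‖ = ‖X‖ := by
  rw [Matrix.linfty_opNorm_def, Matrix.linfty_opNorm_def]
  congr 1
  apply Finset.sup_congr rfl
  intro i _
  apply Finset.sum_congr rfl
  intro j _
  simp [cplx_eq, Matrix.map_apply]

lemma entry_le_norm (X : Matrix (Fin k) (Fin k) ℝ) (i j : Fin k) : |X i j| ≤ ‖X‖ := by
  have h1 : ‖X i j‖₊ ≤ ∑ j', ‖X i j'‖₊ :=
    Finset.single_le_sum (f := fun j' => ‖X i j'‖₊) (fun _ _ => zero_le) (Finset.mem_univ j)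
  have h2 : (∑ j', ‖X i j'‖₊) ≤ ‖X‖₊ := by
    rw [Matrix.linfty_opNNNorm_def]
    exact Finset.le_sup (f := fun i' => ∑ j', ‖X i' j'‖₊) (Finset.mem_univ i)
  have := h1.trans h2
  simpa [← Real.norm_eq_abs] using (NNReal.coe_le_coe.mpr this : (‖X i j‖₊ : ℝ) ≤ ‖X‖₊)

lemma abs_le_specRad (B : Matrix (Fin k) (Fin k) ℝ) {μ : ℂ} (hμ : μ ∈ spectrum ℂ (cplx B)) :
    ‖μ‖ ≤ specRad B :=
  le_csSup (((spectrum.isCompact (cplx B)).image continuous_norm).bddAbove) ⟨μ, hμ, rfl⟩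

lemma specRad_lt_one_of_forall (B : Matrix (Fin k) (Fin k) ℝ)
    (h : ∀ μ ∈ spectrum ℂ (cplx B), ‖μ‖ < 1) : specRad B < 1 := by
  rcases (spectrum ℂ (cplx B)).eq_empty_or_nonempty with he | hne
  · rw [specRad_eq, he]
    simp [Real.sSup_empty]
  · obtain ⟨μ₀, hμ₀, hmax⟩ :=
      (spectrum.isCompact (cplx B)).exists_isMaxOn hne continuous_norm.continuousOn
    have hle : specRad B ≤ ‖μ₀‖ := by
      rw [specRad_eq]
      refine Real.sSup_le ?_ (norm_nonneg _)
      rintro x ⟨μ, hμ, rfl⟩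
      exact hmax hμ
    exact hle.trans_lt (h μ₀ hμ₀)

section nu

variable (ν : Matrix (Fin k) (Fin k) ℝ → ℝ)
  (hν0 : ∀ A, ν A = 0 → A = 0)
  (hνadd : ∀ A B, ν (A + B) ≤ ν A + ν B)
  (hνsmul : ∀ (c : ℝ) A, ν (c • A) = |c| * ν A)
  (hνmul : ∀ A B, ν (A * B) ≤ ν A * ν B)

include hνsmul in
lemma nu_zero : ν 0 = 0 := by
  have := hνsmul 0 0
  simpa using this

include hνadd hνsmul in
lemma nu_nonneg (X : Matrix (Fin k) (Fin k) ℝ) : 0 ≤ ν X := by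
  have h0 : ν 0 = 0 := nu_zero ν hνsmul
  have hneg : ν (-X) = ν X := by
    have := hνsmul (-1) X
    simpa using this
  have := hνadd X (-X)
  rw [add_neg_cancel, h0, hneg] at this
  linarith

include hνadd in
lemma nu_sum {ι : Type*} (s : Finset ι) (f : ι → Matrix (Fin k) (Fin k) ℝ) (h0 : ν 0 = 0) :
    ν (∑ i ∈ s, f i) ≤ ∑ i ∈ s, ν (f i) := by
  classical
  induction s using Finset.induction with
  | empty => simp [h0]
  | insert _ _ hni ih =>
    rw [Finset.sum_insert hni, Finset.sum_insert hni]
    exact (hνadd _ _).trans (by linarith)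

include hνadd hνsmul in
lemma nu_le_norm : ∃ C : ℝ, 0 < C ∧ ∀ X : Matrix (Fin k) (Fin k) ℝ, ν X ≤ C * ‖X‖ := by
  classical
  refine ⟨(∑ i : Fin k, ∑ j : Fin k, ν (Matrix.single i j 1)) + 1, ?_, ?_⟩
  · have : 0 ≤ ∑ i : Fin k, ∑ j : Fin k, ν (Matrix.single i j 1) :=
      Finset.sum_nonneg fun i _ => Finset.sum_nonneg fun j _ => nu_nonneg ν hνadd hνsmul _
    linarith
  · intro X
    have hX : X = ∑ i : Fin k, ∑ j : Fin k, X i j • Matrix.single i j 1 := by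
      conv_lhs => rw [matrix_eq_sum_single X]
      refine Finset.sum_congr rfl fun i _ => Finset.sum_congr rfl fun j _ => ?_
      rw [smul_single, smul_eq_mul, mul_one]
    have h0 : ν 0 = 0 := nu_zero ν hνsmul
    have key : ν (∑ i : Fin k, ∑ j : Fin k, X i j • Matrix.single i j 1) ≤
        ‖X‖ * ∑ i : Fin k, ∑ j : Fin k, ν (Matrix.single i j 1) := by
      calc ν (∑ i : Fin k, ∑ j : Fin k, X i j • Matrix.single i j 1)
          ≤ ∑ i : Fin k, ν (∑ j : Fin k, X i j • Matrix.single i j 1) :=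
            nu_sum ν hνadd _ _ h0
        _ ≤ ∑ i : Fin k, ∑ j : Fin k, ν (X i j • Matrix.single i j 1) :=
            Finset.sum_le_sum fun i _ => nu_sum ν hνadd _ _ h0
        _ ≤ ∑ i : Fin k, ∑ j : Fin k, ‖X‖ * ν (Matrix.single i j 1) := by
            refine Finset.sum_le_sum fun i _ => Finset.sum_le_sum fun j _ => ?_
            rw [hνsmul]
            exact mul_le_mul_of_nonneg_right (entry_le_norm X i j)
              (nu_nonneg ν hνadd hνsmul _)
        _ = ‖X‖ * ∑ i : Fin k, ∑ j : Fin k, ν (Matrix.single i j 1) := by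
            simp [Finset.mul_sum]
    have hS : 0 ≤ ∑ i : Fin k, ∑ j : Fin k, ν (Matrix.single i j 1) :=
      Finset.sum_nonneg fun i _ => Finset.sum_nonneg fun j _ => nu_nonneg ν hνadd hνsmul _
    nth_rewrite 1 [hX]
    nlinarith [key, norm_nonneg X]
include hν0 hνadd hνsmul in
lemma norm_le_nu (hk : 0 < k) : ∃ c : ℝ, 0 < c ∧ ∀ X : Matrix (Fin k) (Fin k) ℝ, ‖X‖ ≤ c * ν X := by
  haveI : Nonempty (Fin k) := ⟨⟨0, hk⟩⟩
  obtain ⟨C, hC, hCle⟩ := nu_le_norm ν hνadd hνsmul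
  have h1 : ∀ X Y : Matrix (Fin k) (Fin k) ℝ, ν X - ν Y ≤ C * ‖X - Y‖ := by
    intro X Y
    have h := hνadd (X - Y) Y
    rw [sub_add_cancel] at h
    have := hCle (X - Y)
    linarith
  have hlip : LipschitzWith C.toNNReal ν := by
    apply LipschitzWith.of_dist_le_mul
    intro X Y
    rw [Real.dist_eq, dist_eq_norm, Real.coe_toNNReal C hC.le]
    rw [abs_sub_le_iff]
    exact ⟨h1 X Y, by have := h1 Y X; rwa [norm_sub_rev] at this⟩
  have hsph : (1 : Matrix (Fin k) (Fin k) ℝ) ∈ Metric.sphere (0 : Matrix (Fin k) (Fin k) ℝ) 1 := by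
    simp
  obtain ⟨X₀, hX₀mem, hmin⟩ :=
    (isCompact_sphere (0 : Matrix (Fin k) (Fin k) ℝ) 1).exists_isMinOn ⟨1, hsph⟩
      hlip.continuous.continuousOn
  have hX₀norm : ‖X₀‖ = 1 := by simpa using hX₀mem
  have hX₀ne : X₀ ≠ 0 := by
    intro h
    rw [h, norm_zero] at hX₀norm
    norm_num at hX₀norm
  have hc : 0 < ν X₀ := by
    rcases (nu_nonneg ν hνadd hνsmul X₀).lt_or_eq with h | h
    · exact h
    · exact absurd (hν0 _ h.symm) hX₀ne
  refine ⟨(ν X₀)⁻¹, inv_pos.mpr hc, fun X => ?_⟩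
  rcases eq_or_ne X 0 with rfl | hX
  · simp [nu_zero ν hνsmul]
  · have hs : 0 < ‖X‖ := norm_pos_iff.mpr hX
    have hY : ‖X‖⁻¹ • X ∈ Metric.sphere (0 : Matrix (Fin k) (Fin k) ℝ) 1 := by
      simp [norm_smul, abs_of_pos (inv_pos.mpr hs), inv_mul_cancel₀ hs.ne']
    have hmin' : ν X₀ ≤ ν (‖X‖⁻¹ • X) := hmin hY
    rw [hνsmul, abs_of_pos (inv_pos.mpr hs)] at hmin'
    have hmain : ‖X‖ * ν X₀ ≤ ν X := by
      have := mul_le_mul_of_nonneg_left hmin' hs.le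
      rw [← mul_assoc, mul_inv_cancel₀ hs.ne', one_mul] at this
      linarith
    have h2 : (ν X₀)⁻¹ * (‖X‖ * ν X₀) ≤ (ν X₀)⁻¹ * ν X :=
      mul_le_mul_of_nonneg_left hmain (inv_pos.mpr hc).le
    rw [show (ν X₀)⁻¹ * (‖X‖ * ν X₀) = ‖X‖ * ((ν X₀)⁻¹ * ν X₀) by ring,
      inv_mul_cancel₀ hc.ne', mul_one] at h2
    linarith

include hνadd hνsmul hνmul in
lemma nu_pow (X : Matrix (Fin k) (Fin k) ℝ) (n : ℕ) : ν (X ^ (n + 1)) ≤ ν X ^ (n + 1) := by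
  induction n with
  | zero => simp
  | succ m ih =>
    have h := hνmul (X ^ (m + 1)) X
    rw [← pow_succ] at h
    refine h.trans ?_
    rw [pow_succ]
    exact mul_le_mul_of_nonneg_right ih (nu_nonneg ν hνadd hνsmul X)

include hν0 hνadd hνsmul hνmul in
lemma specRad_lt_one_of_nu (hk : 0 < k) (B : Matrix (Fin k) (Fin k) ℝ) (hB : ν B < 1) :
    specRad B < 1 := by
  haveI : Nonempty (Fin k) := ⟨⟨0, hk⟩⟩
  obtain ⟨c, hc, hcle⟩ := norm_le_nu ν hν0 hνadd hνsmul hk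
  have hq0 : 0 ≤ ν B := nu_nonneg ν hνadd hνsmul B
  have htend : Tendsto (fun n : ℕ => c * ν B ^ (n + 1)) atTop (𝓝 (c * 0)) := by
    exact (((tendsto_pow_atTop_nhds_zero_of_lt_one hq0 hB).comp
      (tendsto_add_atTop_nat 1))).const_mul c
  rw [mul_zero] at htend
  obtain ⟨N, hN0⟩ := (htend.eventually (gt_mem_nhds one_pos)).exists
  have hN : c * ν B ^ (N + 1) < 1 := by simpa using hN0
  apply specRad_lt_one_of_forall
  intro μ hμ
  have hpow : μ ^ (N + 1) ∈ spectrum ℂ ((cplx B) ^ (N + 1)) :=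
    spectrum.pow_image_subset (cplx B) (N + 1) ⟨μ, hμ, rfl⟩
  have h1 : ‖μ ^ (N + 1)‖ ≤ ‖(cplx B) ^ (N + 1)‖ := spectrum.norm_le_norm_of_mem hpow
  have h2 : (cplx B) ^ (N + 1) = cplx (B ^ (N + 1)) :=
    (map_pow (Complex.ofRealHom.mapMatrix) B (N + 1)).symm
  rw [h2, norm_cplx] at h1
  have h3 : ‖B ^ (N + 1)‖ ≤ c * ν B ^ (N + 1) := by
    have := hcle (B ^ (N + 1))
    have h4 := nu_pow ν hνadd hνsmul hνmul B N
    nlinarith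
  have h5 : ‖μ‖ ^ (N + 1) < 1 := by
    rw [← norm_pow]
    calc ‖μ ^ (N + 1)‖ ≤ ‖B ^ (N + 1)‖ := h1
      _ ≤ c * ν B ^ (N + 1) := h3
      _ < 1 := hN
  have h6 : ‖μ‖ < 1 := by
    by_contra h
    push_neg at h
    exact absurd (one_le_pow₀ h : (1:ℝ) ≤ ‖μ‖ ^ (N+1)) (by linarith)
  simpa using h6

end nu

lemma cplx_smul (c : ℝ) (X : Matrix (Fin k) (Fin k) ℝ) :
    cplx (c • X) = (c : ℂ) • cplx X := by
  ext i j
  simp [cplx_eq, Matrix.map_apply]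

lemma map_conjT {k d : ℕ} (X : Matrix (Fin k) (Fin d) ℝ) :
    (X.map (⇑(Complex.ofRealHom : ℝ →+* ℂ)))ᴴ = (Xᵀ).map (⇑(Complex.ofRealHom : ℝ →+* ℂ)) := by
  ext i j
  simp only [Matrix.conjTranspose_apply, Matrix.map_apply, Matrix.transpose_apply]
  exact Complex.conj_ofReal _

open scoped ComplexOrder in
set_option maxHeartbeats 1000000 in
lemma pow_norm_decay {d : ℕ} (hk : 0 < k) (M : Matrix (Fin k) (Fin d) ℝ)
    (D : Matrix (Fin k) (Fin k) ℝ)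
    (hM : IsUnit (M * Mᵀ)) (hDdiag : ∀ i j, i ≠ j → D i j = 0) (hDpos : ∀ i, 0 < D i i)
    (η : ℝ) (hη : 0 < η) (hρ : η * specRad (M * Mᵀ * D) < 1) :
    ∃ t : ℝ, 0 ≤ t ∧ t < 1 ∧ ∃ K : ℝ, 0 ≤ K ∧
      ∀ m : ℕ, ‖(1 - η • (M * Mᵀ * D)) ^ m‖ ≤ K * t ^ m := by
  haveI : Nonempty (Fin k) := ⟨⟨0, hk⟩⟩
  set A : Matrix (Fin k) (Fin k) ℝ := M * Mᵀ * D with hA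
  set e : Fin k → ℝ := fun i => Real.sqrt (D i i) with he
  have hepos : ∀ i, 0 < e i := fun i => Real.sqrt_pos.mpr (hDpos i)
  set E : Matrix (Fin k) (Fin k) ℝ := diagonal e with hEdef
  have hDdiagonal : D = diagonal (fun i => D i i) := by
    ext i j
    rcases eq_or_ne i j with rfl | hij
    · simp
    · rw [diagonal_apply_ne _ hij]
      exact hDdiag i j hij
  have hEE : E * E = D := by
    rw [hEdef, diagonal_mul_diagonal, hDdiagonal]
    exact congrArg diagonal (funext fun i => Real.mul_self_sqrt (hDpos i).le)
  have hE : IsUnit E := by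
    rw [Matrix.isUnit_iff_isUnit_det, hEdef, det_diagonal, isUnit_iff_ne_zero]
    exact Finset.prod_ne_zero_iff.mpr fun i _ => (hepos i).ne'
  obtain ⟨u, hu⟩ := hE
  set H : Matrix (Fin k) (Fin k) ℝ := E * (M * Mᵀ) * E with hHdef
  have hAconj : A = (↑u⁻¹ : Matrix (Fin k) (Fin k) ℝ) * H * (↑u : Matrix (Fin k) (Fin k) ℝ) := by
    have h1 : (↑u⁻¹ : Matrix (Fin k) (Fin k) ℝ) * E = 1 := by rw [← hu]; exact u.inv_mul
    calc A = 1 * (M * Mᵀ * (E * E)) := by rw [hEE, one_mul, hA]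
      _ = ((↑u⁻¹ : Matrix (Fin k) (Fin k) ℝ) * E) * (M * Mᵀ * (E * E)) := by rw [h1]
      _ = (↑u⁻¹ : Matrix (Fin k) (Fin k) ℝ) * H * (↑u : Matrix (Fin k) (Fin k) ℝ) := by
          rw [hu, hHdef]; simp only [Matrix.mul_assoc]
  -- complexification
  set φ : Matrix (Fin k) (Fin k) ℝ →+* Matrix (Fin k) (Fin k) ℂ := Complex.ofRealHom.mapMatrix
    with hφ
  have hφc : ∀ X, φ X = cplx X := fun X => rfl
  set v : (Matrix (Fin k) (Fin k) ℂ)ˣ := Units.map φ.toMonoidHom u with hv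
  have hvcoe : (↑v : Matrix (Fin k) (Fin k) ℂ) = cplx E := by
    rw [hv, Units.coe_map, ← hu]; rfl
  have hvinv : (↑v⁻¹ : Matrix (Fin k) (Fin k) ℂ) = cplx ((↑u⁻¹ : Matrix (Fin k) (Fin k) ℝ)) := by
    rw [hv, Units.coe_map_inv]; rfl
  -- Hermitian structure
  have hNH : cplx H = ((E * M).map (⇑(Complex.ofRealHom : ℝ →+* ℂ))) *
      ((E * M).map (⇑(Complex.ofRealHom : ℝ →+* ℂ)))ᴴ := by
    have hreal : H = (E * M) * (E * M)ᵀ := by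
      rw [transpose_mul, hHdef, hEdef, diagonal_transpose]
      simp only [Matrix.mul_assoc, hEdef]
    rw [map_conjT]
    show H.map (⇑(Complex.ofRealHom : ℝ →+* ℂ)) = _
    rw [hreal, Matrix.map_mul]
  have hPSD : PosSemidef (cplx H) := by
    rw [hNH]
    exact posSemidef_self_mul_conjTranspose _
  have hHerm : (cplx H).IsHermitian := hPSD.isHermitian
  set eigs : Fin k → ℝ := hHerm.eigenvalues with heigs
  have heignn : ∀ i, 0 ≤ eigs i := fun i => hPSD.eigenvalues_nonneg i
  have hHu : IsUnit H := by
    have hEunit : IsUnit E := ⟨u, hu⟩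
    rw [hHdef]
    exact (hEunit.mul hM).mul hEunit
  have heigne : ∀ i, eigs i ≠ 0 := by
    have hdet : IsUnit (cplx H).det := by
      rw [← Matrix.isUnit_iff_isUnit_det]
      exact hHu.map φ
    rw [hHerm.det_eq_prod_eigenvalues] at hdet
    intro i hi
    rw [isUnit_iff_ne_zero] at hdet
    exact hdet (Finset.prod_eq_zero (Finset.mem_univ i) (by rw [← heigs, hi]; simp))
  have heigpos : ∀ i, 0 < eigs i := fun i => (heignn i).lt_of_ne' (heigne i)
  -- spectrum of A
  have hspecA : spectrum ℂ (cplx A) = Set.range (RCLike.ofReal ∘ eigs) := by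
    have h1 : cplx A = (↑v⁻¹ : Matrix (Fin k) (Fin k) ℂ) * cplx H * (↑v : Matrix (Fin k) (Fin k) ℂ) := by
      rw [← hφc, hAconj, _root_.map_mul, _root_.map_mul, hφc, hφc, hφc, hvinv, hvcoe, hu]
    rw [h1, spectrum.units_conjugate', hHerm.spectral_theorem, Unitary.conjStarAlgAut_apply,
      Unitary.spectrum_star_right_conjugate,
      spectrum_diagonal]
  have heiglt : ∀ i, η * eigs i < 1 := by
    intro i
    have hmem : (eigs i : ℂ) ∈ spectrum ℂ (cplx A) := by
      rw [hspecA]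
      exact ⟨i, rfl⟩
    have habs : ‖((eigs i : ℂ))‖ ≤ specRad A := abs_le_specRad A hmem
    rw [Complex.norm_real, Real.norm_eq_abs, abs_of_nonneg (heignn i)] at habs
    calc η * eigs i ≤ η * specRad A := mul_le_mul_of_nonneg_left habs hη.le
      _ < 1 := hρ
  -- decomposition of P
  set V := hHerm.eigenvectorUnitary with hV
  set dgP : Matrix (Fin k) (Fin k) ℂ := diagonal (fun i => 1 - (η : ℂ) * eigs i) with hdgP
  set G : (Matrix (Fin k) (Fin k) ℂ)ˣ := v⁻¹ * Unitary.toUnits V with hG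
  have hGcoe : (↑G : Matrix (Fin k) (Fin k) ℂ) =
      (↑v⁻¹ : Matrix (Fin k) (Fin k) ℂ) * (V : Matrix (Fin k) (Fin k) ℂ) := by
    rw [hG, Units.val_mul]; rfl
  have hGinv : (↑G⁻¹ : Matrix (Fin k) (Fin k) ℂ) = star (↑V : Matrix (Fin k) (Fin k) ℂ) *
      (↑v : Matrix (Fin k) (Fin k) ℂ) := by
    rw [hG, _root_.mul_inv_rev, Units.val_mul, inv_inv]
    rfl
  have hP : cplx (1 - η • A) = (↑G : Matrix (Fin k) (Fin k) ℂ) * dgP * (↑G⁻¹ : Matrix (Fin k) (Fin k) ℂ) := by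
    have h1 : cplx (1 - η • A) = 1 - (η : ℂ) • cplx A := by
      rw [← hφc, _root_.map_sub, _root_.map_one, hφc, cplx_smul]
    have h2 : cplx A = (↑v⁻¹ : Matrix (Fin k) (Fin k) ℂ) * cplx H * (↑v : Matrix (Fin k) (Fin k) ℂ) := by
      rw [← hφc, hAconj, _root_.map_mul, _root_.map_mul, hφc, hφc, hφc, hvinv, hvcoe, hu]
    have h3 : cplx H = (V : Matrix (Fin k) (Fin k) ℂ) * diagonal (RCLike.ofReal ∘ eigs) *
        star (V : Matrix (Fin k) (Fin k) ℂ) := hHerm.spectral_theorem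
    have h5 : dgP = 1 - (η : ℂ) • diagonal (RCLike.ofReal ∘ eigs) := by
      rw [hdgP]
      ext i j
      rcases eq_or_ne i j with rfl | hij
      · simp [Matrix.diagonal_apply_eq, Function.comp]
      · simp [Matrix.diagonal_apply_ne _ hij, Matrix.one_apply_ne hij]
    have hVV : (V : Matrix (Fin k) (Fin k) ℂ) * star (V : Matrix (Fin k) (Fin k) ℂ) = 1 :=
      Unitary.coe_mul_star_self V
    have hab : (↑v⁻¹ : Matrix (Fin k) (Fin k) ℂ) * (V : Matrix (Fin k) (Fin k) ℂ) *
        (star (V : Matrix (Fin k) (Fin k) ℂ) * (↑v : Matrix (Fin k) (Fin k) ℂ)) = 1 := by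
      calc (↑v⁻¹ : Matrix (Fin k) (Fin k) ℂ) * (V : Matrix (Fin k) (Fin k) ℂ) *
          (star (V : Matrix (Fin k) (Fin k) ℂ) * (↑v : Matrix (Fin k) (Fin k) ℂ))
          = (↑v⁻¹ : Matrix (Fin k) (Fin k) ℂ) * ((V : Matrix (Fin k) (Fin k) ℂ) *
            star (V : Matrix (Fin k) (Fin k) ℂ)) * (↑v : Matrix (Fin k) (Fin k) ℂ) := by
            simp only [Matrix.mul_assoc]
        _ = 1 := by rw [hVV, mul_one, v.inv_mul]
    rw [h1, h2, h3, hGcoe, hGinv, h5]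
    rw [Matrix.mul_sub, Matrix.sub_mul, mul_one]
    rw [hab]
    congr 1
    rw [Matrix.mul_smul, Matrix.smul_mul]
    congr 1
    simp only [Matrix.mul_assoc]
  -- the decay bound
  set t : ℝ := Finset.univ.sup' (Finset.univ_nonempty) (fun i => |1 - η * eigs i|) with ht
  have htlt : t < 1 := by
    rw [ht, Finset.sup'_lt_iff]
    intro i _
    rw [abs_lt]
    constructor
    · linarith [heiglt i]
    · have := mul_pos hη (heigpos i)
      linarith
  have htnn : 0 ≤ t := by
    refine le_trans (abs_nonneg _) (Finset.le_sup' (fun i => |1 - η * eigs i|)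
      (Finset.mem_univ (⟨0, hk⟩ : Fin k)))
  refine ⟨t, htnn, htlt, ‖(↑G : Matrix (Fin k) (Fin k) ℂ)‖ * ‖(↑G⁻¹ : Matrix (Fin k) (Fin k) ℂ)‖,
    mul_nonneg (norm_nonneg _) (norm_nonneg _), fun m => ?_⟩
  have hpow : cplx ((1 - η • A) ^ m) = (↑G : Matrix (Fin k) (Fin k) ℂ) * dgP ^ m * (↑G⁻¹ : Matrix (Fin k) (Fin k) ℂ) := by
    rw [← hφc, _root_.map_pow, hφc, hP, Units.conj_pow]
  have hnormeq : ‖(1 - η • A) ^ m‖ = ‖cplx ((1 - η • A) ^ m)‖ := by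
    rw [norm_cplx]
  have hdiagpow : dgP ^ m = diagonal (fun i => (1 - (η : ℂ) * eigs i) ^ m) := by
    rw [hdgP, diagonal_pow]
    exact congrArg diagonal (funext fun i => Pi.pow_apply _ _ _)
  have hdgnorm : ‖dgP ^ m‖ ≤ t ^ m := by
    rw [hdiagpow, Matrix.linfty_opNorm_diagonal]
    rw [pi_norm_le_iff_of_nonneg (pow_nonneg htnn m)]
    intro i
    rw [norm_pow]
    refine pow_le_pow_left₀ (norm_nonneg _) ?_ m
    have : ‖(1 - (η : ℂ) * (eigs i : ℂ))‖ = |1 - η * eigs i| := by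
      rw [show (1 - (η : ℂ) * (eigs i : ℂ)) = ((1 - η * eigs i : ℝ) : ℂ) by push_cast; ring]
      rw [Complex.norm_real, Real.norm_eq_abs]
    rw [this]
    exact Finset.le_sup' (fun i => |1 - η * eigs i|) (Finset.mem_univ i)
  calc ‖(1 - η • A) ^ m‖ = ‖(↑G : Matrix (Fin k) (Fin k) ℂ) * dgP ^ m * (↑G⁻¹ : Matrix (Fin k) (Fin k) ℂ)‖ := by
        rw [hnormeq, hpow]
    _ ≤ ‖(↑G : Matrix (Fin k) (Fin k) ℂ) * dgP ^ m‖ * ‖(↑G⁻¹ : Matrix (Fin k) (Fin k) ℂ)‖ :=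
        norm_mul_le _ _
    _ ≤ ‖(↑G : Matrix (Fin k) (Fin k) ℂ)‖ * ‖dgP ^ m‖ * ‖(↑G⁻¹ : Matrix (Fin k) (Fin k) ℂ)‖ :=
        mul_le_mul_of_nonneg_right (norm_mul_le _ _) (norm_nonneg _)
    _ ≤ ‖(↑G : Matrix (Fin k) (Fin k) ℂ)‖ * ‖(↑G⁻¹ : Matrix (Fin k) (Fin k) ℂ)‖ * t ^ m := by
        have h1 := norm_nonneg (↑G : Matrix (Fin k) (Fin k) ℂ)
        have h2 := norm_nonneg (↑G⁻¹ : Matrix (Fin k) (Fin k) ℂ)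
        nlinarith [mul_nonneg (mul_nonneg h1 h2) (sub_nonneg.mpr hdgnorm)]

end StmtAux

section Main

attribute [local instance] Matrix.linftyOpNormedRing Matrix.linftyOpNormedAlgebra

theorem stmt1 {k d : ℕ} (M : Matrix (Fin k) (Fin d) ℝ) (D : Matrix (Fin k) (Fin k) ℝ)
    (hM : IsUnit (M * Mᵀ)) (hDdiag : ∀ i j, i ≠ j → D i j = 0) (hDpos : ∀ i, 0 < D i i)
    (η : ℝ) (hη : 0 < η) (hρ : η * specRad (M * Mᵀ * D) < 1)
    (W : Matrix (Fin k) (Fin k) ℝ)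
    -- a sub-multiplicative matrix norm ν
    (ν : Matrix (Fin k) (Fin k) ℝ → ℝ)
    (hν0 : ∀ A, ν A = 0 → A = 0)
    (hνadd : ∀ A B, ν (A + B) ≤ ν A + ν B)
    (hνsmul : ∀ (c : ℝ) A, ν (c • A) = |c| * ν A)
    (hνmul : ∀ A B, ν (A * B) ≤ ν A * ν B)
    (hW : ν W ≤ 1)
    (γ : ℝ) (hγ0 : 0 ≤ γ) (hγ1 : γ < 1) :
    ∃ mbar : ℕ, ∀ m ≥ mbar,
      specRad (γ • W + (1 - γ • W) * (1 - η • (M * Mᵀ * D)) ^ m) < 1 := by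
  classical
  rcases Nat.eq_zero_or_pos k with hk0 | hk
  · subst hk0
    refine ⟨0, fun m _ => ?_⟩
    have hall : ∀ X Y : Matrix (Fin 0) (Fin 0) ℂ, X = Y := fun X Y => by
      ext i j; exact i.elim0
    have hempty : spectrum ℂ
        (StmtAux.cplx (γ • W + (1 - γ • W) * (1 - η • (M * Mᵀ * D)) ^ m)) = ∅ := by
      rw [Set.eq_empty_iff_forall_notMem]
      intro μ hμ
      rw [spectrum.mem_iff] at hμ
      exact hμ ⟨⟨_, 1, hall _ _, hall _ _⟩, rfl⟩
    rw [StmtAux.specRad_eq, hempty]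
    simp [Real.sSup_empty]
  · obtain ⟨t, htnn, htlt, K, hKnn, hdecay⟩ :=
      StmtAux.pow_norm_decay hk M D hM hDdiag hDpos η hη hρ
    obtain ⟨C, hC, hCle⟩ := StmtAux.nu_le_norm ν hνadd hνsmul
    have hν1 : 0 < ν 1 := by
      rcases (StmtAux.nu_nonneg ν hνadd hνsmul 1).lt_or_eq with h | h
      · exact h
      · exfalso
        have h1 : (1 : Matrix (Fin k) (Fin k) ℝ) = 0 := hν0 _ h.symm
        have h2 := congrFun (congrFun h1 ⟨0, hk⟩) ⟨0, hk⟩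
        simp [Matrix.one_apply] at h2
    set ε : ℝ := (1 - γ) / (ν 1 + γ) with hε
    have hνγ : (0:ℝ) < ν 1 + γ := by linarith
    have hεpos : 0 < ε := div_pos (by linarith) hνγ
    have htend : Tendsto (fun m : ℕ => C * K * t ^ m) atTop (𝓝 (C * K * 0)) :=
      (tendsto_pow_atTop_nhds_zero_of_lt_one htnn htlt).const_mul (C * K)
    rw [mul_zero] at htend
    obtain ⟨mbar, hmbar⟩ := Filter.eventually_atTop.mp (htend.eventually (gt_mem_nhds hεpos))
    refine ⟨mbar, fun m hm => ?_⟩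
    set P := (1 : Matrix (Fin k) (Fin k) ℝ) - η • (M * Mᵀ * D) with hP
    have hνPm : ν (P ^ m) < ε := by
      calc ν (P ^ m) ≤ C * ‖P ^ m‖ := hCle _
        _ ≤ C * (K * t ^ m) := by
            have := hdecay m
            nlinarith
        _ = C * K * t ^ m := by ring
        _ < ε := hmbar m hm
    have hB : ν (γ • W + (1 - γ • W) * P ^ m) < 1 := by
      have h1 : ν (γ • W) ≤ γ := by
        rw [hνsmul, abs_of_nonneg hγ0]
        nlinarith [StmtAux.nu_nonneg ν hνadd hνsmul W]
      have h2 : ν (1 - γ • W) ≤ ν 1 + γ := by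
        rw [sub_eq_add_neg]
        refine (hνadd _ _).trans ?_
        have hneg : ν (-(γ • W)) = ν (γ • W) := by
          have := hνsmul (-1) (γ • W); simpa using this
        rw [hneg]
        linarith [h1]
      have h3 : ν ((1 - γ • W) * P ^ m) ≤ (ν 1 + γ) * ν (P ^ m) :=
        (hνmul _ _).trans (mul_le_mul_of_nonneg_right h2
          (StmtAux.nu_nonneg ν hνadd hνsmul _))
      have h4 : (ν 1 + γ) * ν (P ^ m) < (ν 1 + γ) * ε :=
        mul_lt_mul_of_pos_left hνPm hνγ
      have h5 : (ν 1 + γ) * ε = 1 - γ := by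
        rw [hε, mul_comm, div_mul_cancel₀ _ hνγ.ne']
      calc ν (γ • W + (1 - γ • W) * P ^ m)
          ≤ ν (γ • W) + ν ((1 - γ • W) * P ^ m) := hνadd _ _
        _ < γ + (1 - γ) := by nlinarith
        _ = 1 := by ring
    exact StmtAux.specRad_lt_one_of_nu ν hν0 hνadd hνsmul hνmul hk _ hB

end Main
end

section
/- Let M ∈ ℝ^{k×d} have full row rank, W = N M† with ‖W‖ ≤ 1 for some sub-multiplicative norm, 0 ≤ γ < 1, D positive diagonal, η > 0 with η ρ(M Mᵀ D) < 1, B = Σ_{i=0}^{m−1}(I − η D M Mᵀ)^i for m large enough that ρ(γW + (I − γW)(I − η M Mᵀ D)^m) < 1. Then the sequence defined by θ_{(n+1)m} = (I − η Mᵀ B D (M − γN)) θ_{nm} + η Mᵀ B D R with θ₀ = 0 converges as n → ∞ to θ* = M†(I − γW)⁻¹ R. -/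
open Matrix Filter Topology
open scoped Pointwise

noncomputable def pinv {k d : ℕ} (M : Matrix (Fin k) (Fin d) ℝ) : Matrix (Fin d) (Fin k) ℝ :=
  Mᵀ * (M * Mᵀ)⁻¹


open scoped ENNReal NNReal in
lemma entries_bound {n : ℕ} (P : Matrix (Fin n) (Fin n) ℝ) (h : specRad P < 1) :
    ∃ r : ℝ, 0 ≤ r ∧ r < 1 ∧ ∀ᶠ t : ℕ in atTop, ∀ i j, |(P ^ t) i j| ≤ r ^ t := by
  classical
  letI : NormedRing (Matrix (Fin n) (Fin n) ℂ) := Matrix.linftyOpNormedRing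
  letI : NormedAlgebra ℂ (Matrix (Fin n) (Fin n) ℂ) := Matrix.linftyOpNormedAlgebra
  haveI : CompleteSpace (Matrix (Fin n) (Fin n) ℂ) := FiniteDimensional.complete ℂ _
  set φ : Matrix (Fin n) (Fin n) ℝ →+* Matrix (Fin n) (Fin n) ℂ :=
    Complex.ofRealHom.mapMatrix
  set Q : Matrix (Fin n) (Fin n) ℂ := φ P
  have hQP : Q = P.map fun x => (x : ℂ) := rfl
  have hspec : spectralRadius ℂ Q < 1 := by
    have hb : spectralRadius ℂ Q ≤ ENNReal.ofReal (specRad P) := by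
      rw [spectralRadius]
      refine iSup₂_le fun μ hμ => ?_
      have hmem : ‖μ‖ ∈ (fun z : ℂ => ‖z‖) '' spectrum ℂ (P.map fun x => (x : ℂ)) :=
        ⟨μ, by rwa [← hQP], rfl⟩
      have hb2 : ‖μ‖ ≤ specRad P :=
        le_csSup ((Matrix.finite_spectrum _).image _).bddAbove hmem
      rw [← enorm_eq_nnnorm, ← ofReal_norm]
      exact ENNReal.ofReal_le_ofReal (by simpa using hb2)
    exact lt_of_le_of_lt hb (ENNReal.ofReal_lt_one.mpr h)
  obtain ⟨c, hc1, hc2⟩ := exists_between hspec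
  have hctop : c ≠ ⊤ := (hc2.trans ENNReal.one_lt_top).ne
  lift c to ℝ≥0 using hctop with c0
  have hgel := spectrum.pow_nnnorm_pow_one_div_tendsto_nhds_spectralRadius Q
  have hev : ∀ᶠ t : ℕ in atTop, (‖Q ^ t‖₊ : ℝ≥0∞) ^ (1 / (t : ℝ)) < (c0 : ℝ≥0∞) :=
    hgel.eventually_lt_const hc1
  refine ⟨(c0 : ℝ), c0.coe_nonneg, by exact_mod_cast hc2, ?_⟩
  filter_upwards [hev, eventually_ge_atTop 1] with t ht ht1 i j
  have htne : (t : ℝ) ≠ 0 := Nat.cast_ne_zero.mpr (by omega)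
  have hle : (‖Q ^ t‖₊ : ℝ≥0∞) ≤ (c0 : ℝ≥0∞) ^ (t : ℝ) := by
    have : (‖Q ^ t‖₊ : ℝ≥0∞) = ((‖Q ^ t‖₊ : ℝ≥0∞) ^ (1 / (t : ℝ))) ^ (t : ℝ) := by
      rw [← ENNReal.rpow_mul, one_div, inv_mul_cancel₀ htne, ENNReal.rpow_one]
    rw [this]
    exact ENNReal.rpow_le_rpow ht.le (Nat.cast_nonneg t)
  have hle2 : ‖Q ^ t‖ ≤ (c0 : ℝ) ^ t := by
    have hle3 : (‖Q ^ t‖₊ : ℝ≥0∞) ≤ ((c0 ^ t : ℝ≥0) : ℝ≥0∞) := by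
      rwa [ENNReal.coe_pow, ← ENNReal.rpow_natCast]
    exact_mod_cast ENNReal.coe_le_coe.mp hle3
  have hentry : ‖(Q ^ t) i j‖ ≤ ‖Q ^ t‖ := by
    have h1 : ‖(Q ^ t) i j‖₊ ≤ ∑ j', ‖(Q ^ t) i j'‖₊ :=
      Finset.single_le_sum (f := fun j' => ‖(Q ^ t) i j'‖₊) (fun _ _ => zero_le)
        (Finset.mem_univ j)
    have h2 : (∑ j', ‖(Q ^ t) i j'‖₊) ≤ ‖Q ^ t‖₊ := by
      rw [Matrix.linfty_opNNNorm_def]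
      exact Finset.le_sup (f := fun i => ∑ j', ‖(Q ^ t) i j'‖₊) (Finset.mem_univ i)
    exact_mod_cast h1.trans h2
  have hQt : (Q ^ t) i j = ((P ^ t) i j : ℂ) := by
    rw [show Q = φ P from rfl, ← map_pow]; rfl
  calc |(P ^ t) i j| = ‖(Q ^ t) i j‖ := by rw [hQt, Complex.norm_real, Real.norm_eq_abs]
    _ ≤ ‖Q ^ t‖ := hentry
    _ ≤ (c0 : ℝ) ^ t := hle2

lemma specRad_congr {n : ℕ} (A B : Matrix (Fin n) (Fin n) ℝ)
    (h : spectrum ℂ (A.map fun x => (x : ℂ)) = spectrum ℂ (B.map fun x => (x : ℂ))) :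
    specRad A = specRad B := by
  unfold specRad; rw [h]

theorem stmt7 {k d : ℕ} (M N : Matrix (Fin k) (Fin d) ℝ) (D : Matrix (Fin k) (Fin k) ℝ)
    (hM : IsUnit (M * Mᵀ)) (hDdiag : ∀ i j, i ≠ j → D i j = 0) (hDpos : ∀ i, 0 < D i i)
    (η : ℝ) (hη : 0 < η) (hρ : η * specRad (M * Mᵀ * D) < 1)
    -- a sub-multiplicative matrix norm ν with ν (N M†) ≤ 1
    (ν : Matrix (Fin k) (Fin k) ℝ → ℝ)
    (hν0 : ∀ A, ν A = 0 → A = 0)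
    (hνadd : ∀ A B, ν (A + B) ≤ ν A + ν B)
    (hνsmul : ∀ (c : ℝ) A, ν (c • A) = |c| * ν A)
    (hνmul : ∀ A B, ν (A * B) ≤ ν A * ν B)
    (hW : ν (N * pinv M) ≤ 1)
    (γ : ℝ) (hγ0 : 0 ≤ γ) (hγ1 : γ < 1)
    (m : ℕ) (hm : 1 ≤ m)
    (hmρ : specRad (γ • (N * pinv M) +
      (1 - γ • (N * pinv M)) * (1 - η • (M * Mᵀ * D)) ^ m) < 1)
    (R : Fin k → ℝ) (θ : ℕ → Fin d → ℝ) (hθ0 : θ 0 = 0)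
    (hrec : ∀ n : ℕ, θ (n + 1) =
      (1 - η • (Mᵀ * (∑ i ∈ Finset.range m, (1 - η • (D * M * Mᵀ)) ^ i) * D *
        (M - γ • N))).mulVec (θ n) +
      η • (Mᵀ * (∑ i ∈ Finset.range m, (1 - η • (D * M * Mᵀ)) ^ i) * D).mulVec R) :
    Tendsto θ atTop (nhds ((pinv M).mulVec ((1 - γ • (N * pinv M))⁻¹.mulVec R))) := by
  classical
  set S : Matrix (Fin k) (Fin k) ℝ := M * Mᵀ with hSdef
  set W : Matrix (Fin k) (Fin k) ℝ := N * pinv M with hWdef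
  set T : Matrix (Fin k) (Fin k) ℝ := 1 - γ • W with hTdef
  set B : Matrix (Fin k) (Fin k) ℝ :=
    ∑ i ∈ Finset.range m, (1 - η • (D * M * Mᵀ)) ^ i with hBdef
  set A : Matrix (Fin d) (Fin d) ℝ := 1 - η • (Mᵀ * B * D * (M - γ • N)) with hAdef
  have hSdet : IsUnit S.det := (Matrix.isUnit_iff_isUnit_det S).mp hM
  have hMpinv : M * pinv M = 1 := by
    rw [pinv, ← Matrix.mul_assoc, ← hSdef, Matrix.mul_nonsing_inv S hSdet]
  -- nonnegativity of ν
  have hν00 : ν 0 = 0 := by have := hνsmul 0 0; simpa using this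
  have hνneg : ∀ A', ν (-A') = ν A' := by
    intro A'; have := hνsmul (-1) A'; simpa using this
  have hνnonneg : ∀ A', 0 ≤ ν A' := by
    intro A'
    have h1 := hνadd A' (-A')
    rw [add_neg_cancel, hν00, hνneg] at h1
    linarith
  -- invertibility of T
  have hTdet : IsUnit T.det := by
    rw [isUnit_iff_ne_zero]
    intro hdet
    obtain ⟨v, hv0, hv⟩ := Matrix.exists_mulVec_eq_zero_iff.mpr hdet
    have hveq : (γ • W).mulVec v = v := by
      have h1 : T.mulVec v = v - (γ • W).mulVec v := by
        rw [hTdef, Matrix.sub_mulVec, Matrix.one_mulVec]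
      rw [hv] at h1
      exact (sub_eq_zero.mp h1.symm).symm
    set V : Matrix (Fin k) (Fin k) ℝ := Matrix.of fun i (_ : Fin k) => v i with hVdef
    have hV : (γ • W) * V = V := by
      ext i j
      have h2 : ((γ • W) * V) i j = ((γ • W) *ᵥ v) i := by
        simp [Matrix.mul_apply, Matrix.mulVec, dotProduct, hVdef]
      rw [h2, hveq]; rfl
    have hVne : V ≠ 0 := by
      obtain ⟨i, hi⟩ := Function.ne_iff.mp hv0
      intro hVeq
      apply hi
      have := congrFun (congrFun hVeq i) i
      simpa [hVdef] using this
    have hνV : 0 < ν V :=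
      lt_of_le_of_ne (hνnonneg V) fun hh => hVne (hν0 V hh.symm)
    have hchain : ν V ≤ γ * ν V := by
      calc ν V = ν ((γ • W) * V) := by rw [hV]
        _ ≤ ν (γ • W) * ν V := hνmul _ _
        _ = γ * ν W * ν V := by rw [hνsmul, abs_of_nonneg hγ0]
        _ ≤ γ * 1 * ν V := by
            apply mul_le_mul_of_nonneg_right _ (hνnonneg V)
            exact mul_le_mul_of_nonneg_left hW hγ0
        _ = γ * ν V := by ring
    nlinarith
  have hTT : T * T⁻¹ = 1 := Matrix.mul_nonsing_inv T hTdet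
  have hNMT : N * Mᵀ = W * S := by
    rw [hWdef, pinv, ← hSdef, Matrix.mul_assoc, Matrix.mul_assoc,
      Matrix.nonsing_inv_mul S hSdet, Matrix.mul_one]
  have hMN : (M - γ • N) * Mᵀ = T * S := by
    rw [Matrix.sub_mul, Matrix.smul_mul, hNMT, hTdef, Matrix.sub_mul, Matrix.one_mul,
      Matrix.smul_mul, hSdef]
  set X : Matrix (Fin k) (Fin k) ℝ := η • (B * D) with hXdef
  set Y : Matrix (Fin k) (Fin k) ℝ := T * S with hYdef
  set C : Matrix (Fin k) (Fin k) ℝ := 1 - X * Y with hCdef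
  have hAM : A * Mᵀ = Mᵀ * C := by
    have h1 : Mᵀ * B * D * (M - γ • N) * Mᵀ = Mᵀ * B * D * (T * S) := by
      rw [Matrix.mul_assoc (Mᵀ * B * D), hMN]
    rw [hAdef, hCdef]
    rw [Matrix.sub_mul, Matrix.one_mul, Matrix.smul_mul, h1]
    rw [Matrix.mul_sub Mᵀ 1 (X * Y), Matrix.mul_one]
    rw [hXdef, hYdef, Matrix.smul_mul, Matrix.mul_smul]
    simp only [Matrix.mul_assoc]
  have hpow : ∀ n : ℕ, A ^ n * Mᵀ = Mᵀ * C ^ n := by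
    intro n
    induction n with
    | zero => simp
    | succ n ih =>
      rw [pow_succ, pow_succ, Matrix.mul_assoc, hAM, ← Matrix.mul_assoc, ih,
        Matrix.mul_assoc]
  -- Gamma identity
  have hDS : D * M * Mᵀ = D * S := by rw [hSdef, Matrix.mul_assoc]
  have hcomm : ∀ i : ℕ, S * (1 - η • (D * S)) ^ i = (1 - η • (S * D)) ^ i * S := by
    intro i
    induction i with
    | zero => simp
    | succ i ih =>
      have hstep : S * (1 - η • (D * S)) = (1 - η • (S * D)) * S := by
        rw [Matrix.mul_sub, Matrix.sub_mul, Matrix.mul_one, Matrix.one_mul,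
          Matrix.mul_smul, Matrix.smul_mul, ← Matrix.mul_assoc]
      rw [pow_succ, pow_succ, ← Matrix.mul_assoc, ih, Matrix.mul_assoc, hstep,
        ← Matrix.mul_assoc]
  have hSB : S * B = (∑ i ∈ Finset.range m, (1 - η • (S * D)) ^ i) * S := by
    rw [hBdef, Finset.mul_sum, Finset.sum_mul]
    refine Finset.sum_congr rfl fun i _ => ?_
    rw [hDS, hcomm]
  have hgeom : (∑ i ∈ Finset.range m, (1 - η • (S * D)) ^ i) * (η • (S * D)) =
      1 - (1 - η • (S * D)) ^ m := by
    have h2 := geom_sum_mul (1 - η • (S * D)) m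
    have h3 : (1 - η • (S * D)) - 1 = -(η • (S * D)) := by abel
    rw [h3, Matrix.mul_neg] at h2
    have := congrArg Neg.neg h2
    rw [neg_neg, neg_sub] at this
    exact this
  set B' : Matrix (Fin k) (Fin k) ℝ :=
    ∑ i ∈ Finset.range m, (1 - η • (S * D)) ^ i with hB'def
  have hYX : Y * X = T - T * (1 - η • (S * D)) ^ m := by
    have e1 : Y * X = η • (T * (B' * (S * D))) := by
      rw [hYdef, hXdef, Matrix.mul_smul, Matrix.mul_assoc T S (B * D),
        ← Matrix.mul_assoc S B D, hSB, Matrix.mul_assoc]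
    have e2 : T * (B' * (η • (S * D))) = η • (T * (B' * (S * D))) := by
      rw [Matrix.mul_smul, Matrix.mul_smul]
    rw [e1, ← e2, hgeom, Matrix.mul_sub, Matrix.mul_one]
  have hGamma : γ • W + T * (1 - η • (S * D)) ^ m = 1 - Y * X := by
    rw [hYX, hTdef]
    abel
  -- spectral radius of C is < 1
  have hC : specRad C < 1 := by
    rw [hGamma] at hmρ
    have heq : specRad C = specRad (1 - Y * X) := by
      apply specRad_congr
      have hmapC : (C.map fun x => (x : ℂ)) =
          1 - (Complex.ofRealHom.mapMatrix X) * (Complex.ofRealHom.mapMatrix Y) := by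
        rw [hCdef]
        show Complex.ofRealHom.mapMatrix (1 - X * Y) = _
        rw [_root_.map_sub, _root_.map_one, _root_.map_mul]
      have hmapG : ((1 - Y * X).map fun x => (x : ℂ)) =
          1 - (Complex.ofRealHom.mapMatrix Y) * (Complex.ofRealHom.mapMatrix X) := by
        show Complex.ofRealHom.mapMatrix (1 - Y * X) = _
        rw [_root_.map_sub, _root_.map_one, _root_.map_mul]
      rw [hmapC, hmapG]
      set Xc := Complex.ofRealHom.mapMatrix X
      set Yc := Complex.ofRealHom.mapMatrix Y
      have hswap : spectrum ℂ (Xc * Yc) = spectrum ℂ (Yc * Xc) := by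
        ext μ
        by_cases hμ : μ = 0
        · subst hμ
          rw [spectrum.zero_mem_iff (R := ℂ), spectrum.zero_mem_iff (R := ℂ), not_iff_not,
            Matrix.isUnit_iff_isUnit_det, Matrix.isUnit_iff_isUnit_det,
            Matrix.det_mul, Matrix.det_mul, mul_comm]
        · have hs : spectrum ℂ (Xc * Yc) \ {0} = spectrum ℂ (Yc * Xc) \ {0} :=
            spectrum.nonzero_mul_comm Xc Yc
          constructor
          · intro hmem
            have h4 : μ ∈ spectrum ℂ (Xc * Yc) \ {0} := ⟨hmem, hμ⟩
            rw [hs] at h4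
            exact h4.1
          · intro hmem
            have h4 : μ ∈ spectrum ℂ (Yc * Xc) \ {0} := ⟨hmem, hμ⟩
            rw [← hs] at h4
            exact h4.1
      have e1 : (1 : Matrix (Fin k) (Fin k) ℂ) =
          algebraMap ℂ (Matrix (Fin k) (Fin k) ℂ) 1 := (_root_.map_one _).symm
      calc spectrum ℂ (1 - Xc * Yc) = ({1} : Set ℂ) - spectrum ℂ (Xc * Yc) := by
            rw [e1]; exact (spectrum.singleton_sub_eq (Xc * Yc) (1 : ℂ)).symm
        _ = ({1} : Set ℂ) - spectrum ℂ (Yc * Xc) := by rw [hswap]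
        _ = spectrum ℂ (1 - Yc * Xc) := by rw [e1]; exact spectrum.singleton_sub_eq (Yc * Xc) (1 : ℂ)
    rw [heq]; exact hmρ
  -- the fixed point
  set θs : Fin d → ℝ := (pinv M).mulVec (T⁻¹.mulVec R) with hθsdef
  clear_value θs
  have hMNθ : (M - γ • N) *ᵥ θs = R := by
    have hfactor : (M - γ • N) * pinv M = T := by
      rw [Matrix.sub_mul, hMpinv, Matrix.smul_mul, ← hWdef, ← hTdef]
    rw [hθsdef, Matrix.mulVec_mulVec, hfactor, Matrix.mulVec_mulVec, hTT,
      Matrix.one_mulVec]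
  have hfixA : A *ᵥ θs + η • (Mᵀ * B * D) *ᵥ R = θs := by
    have h5 : (Mᵀ * B * D * (M - γ • N)) *ᵥ θs = (Mᵀ * B * D) *ᵥ R := by
      rw [← Matrix.mulVec_mulVec, hMNθ]
    rw [hAdef, Matrix.sub_mulVec, Matrix.one_mulVec, Matrix.smul_mulVec, h5]
    abel
  have hclosed : ∀ n : ℕ, θ n = θs - (A ^ n) *ᵥ θs := by
    intro n
    induction n with
    | zero => rw [hθ0, pow_zero, Matrix.one_mulVec, sub_self]
    | succ n ih =>
      rw [hrec n, ih]
      calc A *ᵥ (θs - A ^ n *ᵥ θs) + η • (Mᵀ * B * D) *ᵥ R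
          = (A *ᵥ θs + η • (Mᵀ * B * D) *ᵥ R) - A ^ (n + 1) *ᵥ θs := by
            rw [Matrix.mulVec_sub, Matrix.mulVec_mulVec, ← pow_succ']
            abel
        _ = θs - A ^ (n + 1) *ᵥ θs := by rw [hfixA]
  have hθsM : θs = Mᵀ *ᵥ (S⁻¹ *ᵥ (T⁻¹ *ᵥ R)) := by
    rw [hθsdef, pinv, ← hSdef, ← Matrix.mulVec_mulVec]
  have hAn : ∀ n : ℕ, (A ^ n) *ᵥ θs = Mᵀ *ᵥ ((C ^ n) *ᵥ (S⁻¹ *ᵥ (T⁻¹ *ᵥ R))) := by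
    intro n
    rw [hθsM, Matrix.mulVec_mulVec, hpow n, ← Matrix.mulVec_mulVec]
  -- limits
  have hCn : ∀ p q, Tendsto (fun n : ℕ => (C ^ n) p q) atTop (nhds 0) := by
    intro p q
    obtain ⟨r, hr0, hr1, hev⟩ := entries_bound C hC
    refine squeeze_zero_norm' ?_ (tendsto_pow_atTop_nhds_zero_of_lt_one hr0 hr1)
    filter_upwards [hev] with t ht
    simpa [Real.norm_eq_abs] using ht p q
  have hlim0 : Tendsto (fun n : ℕ => Mᵀ *ᵥ ((C ^ n) *ᵥ (S⁻¹ *ᵥ (T⁻¹ *ᵥ R))))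
      atTop (nhds 0) := by
    rw [tendsto_pi_nhds]
    intro x
    set u : Fin k → ℝ := S⁻¹ *ᵥ (T⁻¹ *ᵥ R) with hudef
    have hrepr : ∀ n : ℕ, (Mᵀ *ᵥ ((C ^ n) *ᵥ u)) x =
        ∑ j : Fin k, ∑ l : Fin k, Mᵀ x j * ((C ^ n) j l * u l) := by
      intro n
      simp [Matrix.mulVec, dotProduct, Finset.mul_sum]
    simp only [hrepr, Pi.zero_apply]
    have hsum := tendsto_finset_sum (Finset.univ : Finset (Fin k))
      (fun j _ => tendsto_finset_sum (Finset.univ : Finset (Fin k))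
        (fun l _ => ((hCn j l).mul_const (u l)).const_mul (Mᵀ x j)))
    simpa using hsum
  have hθeq : θ = fun n => θs - Mᵀ *ᵥ ((C ^ n) *ᵥ (S⁻¹ *ᵥ (T⁻¹ *ᵥ R))) :=
    funext fun n => by rw [hclosed n, hAn n]
  rw [hθeq]
  simpa using tendsto_const_nhds.sub hlim0
end

section
/- Let M ∈ ℝ^{k×d} have full row rank with pseudoinverse M†. For any θ₀ ∈ ℝ^d, the limit of the over-parameterized target TD iterates started from θ₀ equals M†(I − γW)⁻¹ R + (I − M† M + M†(I − γW)⁻¹ γ N (I − M† M)) θ₀, where W = N M†. In particular, the component (I − M†M)θ₀ orthogonal to the row space of M appears in the limit. -/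
open Matrix Filter Topology
open scoped ENNReal NNReal

section aux

attribute [local instance] Matrix.linftyOpNormedRing Matrix.linftyOpNormedAlgebra

lemma aux_entry_le {k : ℕ} (X : Matrix (Fin k) (Fin k) ℂ) (i j : Fin k) :
    ‖X i j‖₊ ≤ ‖X‖₊ := by
  rw [Matrix.linfty_opNNNorm_def]
  refine le_trans ?_ (Finset.le_sup (f := fun i => ∑ j, ‖X i j‖₊) (Finset.mem_univ i))
  exact Finset.single_le_sum (f := fun j => ‖X i j‖₊) (fun a _ => zero_le) (Finset.mem_univ j)

lemma aux_pow_tendsto {k : ℕ} (T : Matrix (Fin k) (Fin k) ℝ)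
    (h : specRad T < 1) (i j : Fin k) :
    Tendsto (fun n => (T ^ n) i j) atTop (𝓝 0) := by
  haveI : CompleteSpace (Matrix (Fin k) (Fin k) ℂ) := FiniteDimensional.complete ℂ _
  set B : Matrix (Fin k) (Fin k) ℂ := T.map (fun x => (x : ℂ)) with hB
  have hfin : (spectrum ℂ B).Finite := B.finite_spectrum
  have hsr : spectralRadius ℂ B < 1 := by
    have h1 : spectralRadius ℂ B ≤ ENNReal.ofReal (specRad T) := by
      rw [spectralRadius]
      refine iSup₂_le fun z hz => ?_
      rw [← enorm_eq_nnnorm, ← ofReal_norm]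
      refine ENNReal.ofReal_le_ofReal ?_
      exact le_csSup (hfin.image _).bddAbove ⟨z, hz, rfl⟩
    exact lt_of_le_of_lt h1 (by exact_mod_cast ENNReal.ofReal_lt_one.mpr h)
  obtain ⟨r, hr1, hr2⟩ := ENNReal.lt_iff_exists_nnreal_btwn.mp hsr
  have hr2' : r < 1 := by exact_mod_cast hr2
  have hg := spectrum.pow_nnnorm_pow_one_div_tendsto_nhds_spectralRadius B
  have hev : ∀ᶠ (n : ℕ) in atTop, ((‖B ^ n‖₊ : ℝ≥0∞)) ^ (1 / (n : ℝ)) < (r : ℝ≥0∞) :=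
    hg.eventually_lt_const hr1
  have hbd : ∀ᶠ (n : ℕ) in atTop, ‖B ^ n‖ ≤ (r : ℝ) ^ n := by
    filter_upwards [hev, eventually_ge_atTop 1] with n hn hn1
    have hne : (n : ℝ) ≠ 0 := by positivity
    have h2 : (‖B ^ n‖₊ : ℝ≥0∞) ≤ (r : ℝ≥0∞) ^ (n : ℝ) := by
      calc (‖B ^ n‖₊ : ℝ≥0∞) = (((‖B ^ n‖₊ : ℝ≥0∞)) ^ (1 / (n : ℝ))) ^ (n : ℝ) := by
            rw [← ENNReal.rpow_mul]
            rw [one_div, inv_mul_cancel₀ hne, ENNReal.rpow_one]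
        _ ≤ (r : ℝ≥0∞) ^ (n : ℝ) := ENNReal.rpow_le_rpow hn.le (by positivity)
    rw [ENNReal.rpow_natCast] at h2
    rw [← ENNReal.coe_pow] at h2
    have := ENNReal.coe_le_coe.mp h2
    exact_mod_cast this
  have hTB : ∀ n : ℕ, |(T ^ n) i j| ≤ ‖B ^ n‖ := by
    intro n
    have hBn : B ^ n = (T ^ n).map (fun x => (x : ℂ)) := by
      rw [hB]
      exact (map_pow (Complex.ofRealHom).mapMatrix T n).symm
    have : ‖(B ^ n) i j‖ ≤ ‖B ^ n‖ := by
      exact_mod_cast aux_entry_le (B ^ n) i j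
    rw [hBn, Matrix.map_apply, Complex.norm_real] at this
    rw [← Real.norm_eq_abs, hBn]
    exact this
  have hg0 : Tendsto (fun n : ℕ => (r : ℝ) ^ n) atTop (𝓝 0) :=
    tendsto_pow_atTop_nhds_zero_of_lt_one r.coe_nonneg (by exact_mod_cast hr2')
  have : Tendsto (fun n : ℕ => |(T ^ n) i j|) atTop (𝓝 0) := by
    refine squeeze_zero' (Eventually.of_forall fun n => abs_nonneg _) ?_ hg0
    filter_upwards [hbd] with n hn using le_trans (hTB n) hn
  exact tendsto_zero_iff_abs_tendsto_zero _ |>.mpr this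

end aux

lemma tel {k : ℕ} (X : Matrix (Fin k) (Fin k) ℝ) (m : ℕ) :
    (∑ i ∈ Finset.range m, (1 - X) ^ i) * X = 1 - (1 - X) ^ m := by
  induction m with
  | zero => simp
  | succ n ih =>
    rw [Finset.sum_range_succ, add_mul, ih, pow_succ]
    noncomm_ring

lemma comm_pow {k : ℕ} (A B : Matrix (Fin k) (Fin k) ℝ) (η : ℝ) (i : ℕ) :
    A * (1 - η • (B * A)) ^ i = (1 - η • (A * B)) ^ i * A := by
  have hstep : A * (1 - η • (B * A)) = (1 - η • (A * B)) * A := by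
    rw [mul_sub, sub_mul, mul_one, one_mul, mul_smul_comm, smul_mul_assoc, mul_assoc]
  induction i with
  | zero => simp
  | succ n ih =>
    rw [pow_succ, pow_succ, ← mul_assoc, ih, mul_assoc, hstep, mul_assoc]

theorem stmt8 {k d : ℕ} (M N : Matrix (Fin k) (Fin d) ℝ) (D : Matrix (Fin k) (Fin k) ℝ)
    (hM : IsUnit (M * Mᵀ)) (hDdiag : ∀ i j, i ≠ j → D i j = 0) (hDpos : ∀ i, 0 < D i i)
    (η : ℝ) (hη : 0 < η) (hρ : η * specRad (M * Mᵀ * D) < 1)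
    (ν : Matrix (Fin k) (Fin k) ℝ → ℝ)
    (hν0 : ∀ A, ν A = 0 → A = 0)
    (hνadd : ∀ A B, ν (A + B) ≤ ν A + ν B)
    (hνsmul : ∀ (c : ℝ) A, ν (c • A) = |c| * ν A)
    (hνmul : ∀ A B, ν (A * B) ≤ ν A * ν B)
    (hW : ν (N * pinv M) ≤ 1)
    (γ : ℝ) (hγ0 : 0 ≤ γ) (hγ1 : γ < 1)
    (m : ℕ) (hm : 1 ≤ m)
    (hmρ : specRad (γ • (N * pinv M) +
      (1 - γ • (N * pinv M)) * (1 - η • (M * Mᵀ * D)) ^ m) < 1)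
    (R : Fin k → ℝ) (θ : ℕ → Fin d → ℝ)
    (hrec : ∀ n : ℕ, θ (n + 1) =
      (1 - η • (Mᵀ * (∑ i ∈ Finset.range m, (1 - η • (D * M * Mᵀ)) ^ i) * D *
        (M - γ • N))).mulVec (θ n) +
      η • (Mᵀ * (∑ i ∈ Finset.range m, (1 - η • (D * M * Mᵀ)) ^ i) * D).mulVec R) :
    Tendsto θ atTop (nhds
      ((pinv M).mulVec ((1 - γ • (N * pinv M))⁻¹.mulVec R) +
        (1 - pinv M * M +
          pinv M * (1 - γ • (N * pinv M))⁻¹ * (γ • (N * (1 - pinv M * M)))).mulVec (θ 0))) := by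
  classical
  set Q : Matrix (Fin d) (Fin k) ℝ := pinv M with hQ
  set W : Matrix (Fin k) (Fin k) ℝ := N * Q with hWdef
  set G : Matrix (Fin k) (Fin k) ℝ := 1 - γ • W with hGdef
  set S : Matrix (Fin k) (Fin k) ℝ :=
    ∑ i ∈ Finset.range m, (1 - η • (D * M * Mᵀ)) ^ i with hS
  set E : Matrix (Fin k) (Fin k) ℝ := (1 - η • (M * Mᵀ * D)) ^ m with hE
  set F : Matrix (Fin d) (Fin k) ℝ := η • (Mᵀ * S * D) with hF
  set A : Matrix (Fin d) (Fin d) ℝ := 1 - η • (Mᵀ * S * D * (M - γ • N)) with hA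
  set C : Matrix (Fin d) (Fin d) ℝ :=
    1 - Q * M + Q * G⁻¹ * (γ • (N * (1 - Q * M))) with hC
  set T'' : Matrix (Fin k) (Fin k) ℝ := γ • W + G * E with hT''def
  set T' : Matrix (Fin k) (Fin k) ℝ := 1 - (1 - E) * G with hT'def
  clear_value Q W G S E F A C T'' T'
  -- basic pseudoinverse facts
  have hdet : IsUnit (M * Mᵀ).det := (Matrix.isUnit_iff_isUnit_det _).mp hM
  have h1 : M * Q = 1 := by
    rw [hQ]
    show M * (Mᵀ * (M * Mᵀ)⁻¹) = 1
    rw [← Matrix.mul_assoc, Matrix.mul_nonsing_inv _ hdet]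
  have h2 : Q * (M * Mᵀ) = Mᵀ := by
    rw [hQ]
    show Mᵀ * (M * Mᵀ)⁻¹ * (M * Mᵀ) = Mᵀ
    rw [Matrix.mul_assoc, Matrix.nonsing_inv_mul _ hdet, Matrix.mul_one]
  -- ν is nonnegative
  have hν_zero : ν 0 = 0 := by
    have := hνsmul 0 0
    simpa using this
  have hν_nonneg : ∀ X, 0 ≤ ν X := by
    intro X
    have h3 := hνadd X ((-1 : ℝ) • X)
    have h4 : X + (-1 : ℝ) • X = 0 := by simp
    rw [h4, hν_zero, hνsmul] at h3
    simp only [abs_neg, abs_one, one_mul] at h3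
    linarith
  -- G is invertible
  have hGunit : IsUnit G := by
    rw [← Matrix.mulVec_injective_iff_isUnit]
    intro x y hxy
    set z : Fin k → ℝ := x - y with hz
    have hz0 : G.mulVec z = 0 := by
      rw [hz, Matrix.mulVec_sub, hxy, sub_self]
    have hz1 : z = γ • W.mulVec z := by
      have h5 : (1 : Matrix (Fin k) (Fin k) ℝ).mulVec z - (γ • W).mulVec z = 0 := by
        rw [← Matrix.sub_mulVec, ← hGdef, hz0]
      rw [Matrix.one_mulVec, Matrix.smul_mulVec] at h5
      exact (sub_eq_zero.mp h5)
    set X : Matrix (Fin k) (Fin k) ℝ := Matrix.of (fun i _ => z i) with hX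
    have hXz : X = γ • (W * X) := by
      funext i j
      have h5 := congrFun hz1 i
      have h6 : (W * X) i j = W.mulVec z i := by
        simp [hX, Matrix.mul_apply, Matrix.mulVec, dotProduct]
      show z i = (γ • (W * X)) i j
      rw [Matrix.smul_apply, h6, smul_eq_mul, h5, Pi.smul_apply, smul_eq_mul]
    have hWX : ν (W * X) ≤ ν X :=
      le_trans (hνmul W X) (mul_le_of_le_one_left (hν_nonneg X) hW)
    have hle : ν X ≤ γ * ν X := by
      calc ν X = ν (γ • (W * X)) := by rw [← hXz]
        _ = |γ| * ν (W * X) := hνsmul _ _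
        _ = γ * ν (W * X) := by rw [abs_of_nonneg hγ0]
        _ ≤ γ * ν X := mul_le_mul_of_nonneg_left hWX hγ0
    have hXν : ν X = 0 :=
      le_antisymm (by nlinarith [hν_nonneg X]) (hν_nonneg X)
    have hX0 : X = 0 := hν0 _ hXν
    have hzz : z = 0 := by
      funext i
      have := congrFun (congrFun hX0 i) i
      simpa [hX] using this
    rw [hz] at hzz
    exact sub_eq_zero.mp hzz
  have hGdet : IsUnit G.det := (Matrix.isUnit_iff_isUnit_det _).mp hGunit
  have hGG : G * G⁻¹ = 1 := Matrix.mul_nonsing_inv _ hGdet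
  have hGG' : G⁻¹ * G = 1 := Matrix.nonsing_inv_mul _ hGdet
  have hGX : ∀ X : Matrix (Fin k) (Fin k) ℝ, G * (G⁻¹ * X) = X := fun X => by
    rw [← Matrix.mul_assoc, hGG, Matrix.one_mul]
  have hGXd : ∀ X : Matrix (Fin k) (Fin d) ℝ, G * (G⁻¹ * X) = X := fun X => by
    rw [← Matrix.mul_assoc, hGG, Matrix.one_mul]
  -- M * F = 1 - E
  have hMF : M * F = 1 - E := by
    rw [hF, hE, Matrix.mul_smul, ← Matrix.mul_assoc M (Mᵀ * S) D,
      ← Matrix.mul_assoc M Mᵀ S]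
    have e2 : M * Mᵀ * S =
        (∑ i ∈ Finset.range m, (1 - η • (M * Mᵀ * D)) ^ i) * (M * Mᵀ) := by
      rw [hS, Finset.mul_sum, Finset.sum_mul]
      refine Finset.sum_congr rfl fun i _ => ?_
      rw [Matrix.mul_assoc D M Mᵀ]
      exact comm_pow (M * Mᵀ) D η i
    rw [e2, Matrix.mul_assoc _ (M * Mᵀ) D, ← Matrix.mul_smul]
    exact tel (η • (M * Mᵀ * D)) m
  have hQMF : Q * (M * F) = F := by
    rw [hF, Matrix.mul_smul, Matrix.mul_smul]
    congr 1
    rw [← Matrix.mul_assoc M (Mᵀ * S) D, ← Matrix.mul_assoc M Mᵀ S,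
      ← Matrix.mul_assoc Q (M * Mᵀ * S) D, ← Matrix.mul_assoc Q (M * Mᵀ) S, h2]
  have hFE : F = Q * (1 - E) := by rw [← hQMF, hMF]
  -- A in terms of F
  have hA' : A = 1 - F * (M - γ • N) := by
    rw [hA, hF, Matrix.smul_mul]
  have hMN_Q : (M - γ • N) * Q = G := by
    rw [Matrix.sub_mul, Matrix.smul_mul, h1, hGdef, hWdef]
  -- T'' = 1 - G * (1 - E)
  have h1G : (1 : Matrix (Fin k) (Fin k) ℝ) - G = γ • W := by
    rw [hGdef, sub_sub_cancel]
  have hT''eq : T'' = 1 - G * (1 - E) := by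
    rw [hT''def, ← h1G]
    noncomm_ring
  have hGT : G * T' = T'' * G := by
    rw [hT'def, hT''eq]
    noncomm_ring
  have hT'eq : T' = G⁻¹ * T'' * G := by
    have h7 : G⁻¹ * (G * T') = G⁻¹ * (T'' * G) := by rw [hGT]
    rwa [← Matrix.mul_assoc, hGG', Matrix.one_mul, ← Matrix.mul_assoc] at h7
  -- A * Q = Q * T'
  have hAQ : A * Q = Q * T' := by
    rw [hA', Matrix.sub_mul 1 (F * (M - γ • N)) Q, Matrix.one_mul,
      Matrix.mul_assoc F (M - γ • N) Q, hMN_Q, hFE,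
      Matrix.mul_assoc Q (1 - E) G, hT'def, Matrix.mul_sub Q 1 ((1 - E) * G),
      Matrix.mul_one]
  have hAnQ : ∀ n : ℕ, A ^ n * Q = Q * T' ^ n := by
    intro n
    induction n with
    | zero => rw [pow_zero, pow_zero, Matrix.one_mul, Matrix.mul_one]
    | succ n ih =>
      rw [pow_succ, pow_succ, Matrix.mul_assoc, hAQ, ← Matrix.mul_assoc, ih, Matrix.mul_assoc]
  have hT'n : ∀ n : ℕ, T' ^ n = G⁻¹ * T'' ^ n * G := by
    intro n
    induction n with
    | zero => rw [pow_zero, pow_zero, Matrix.mul_one, hGG']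
    | succ n ih =>
      rw [pow_succ, pow_succ, ih, hT'eq]
      simp only [Matrix.mul_assoc, hGX]
  -- fixed point identities
  have hM1QM : M * (1 - Q * M) = 0 := by
    rw [Matrix.mul_sub, Matrix.mul_one, ← Matrix.mul_assoc, h1, Matrix.one_mul, sub_self]
  have hMC : (M - γ • N) * C = 0 := by
    rw [hC, Matrix.mul_add]
    have p1 : (M - γ • N) * (1 - Q * M) = -(γ • (N * (1 - Q * M))) := by
      rw [Matrix.sub_mul, hM1QM, Matrix.smul_mul, zero_sub]
    have p2 : (M - γ • N) * (Q * G⁻¹ * (γ • (N * (1 - Q * M)))) =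
        γ • (N * (1 - Q * M)) := by
      rw [Matrix.mul_assoc Q G⁻¹ (γ • (N * (1 - Q * M))),
        ← Matrix.mul_assoc (M - γ • N) Q (G⁻¹ * (γ • (N * (1 - Q * M)))), hMN_Q]
      exact hGXd _
    rw [p1, p2, neg_add_cancel]
  have hAC : A * C = C := by
    rw [hA', Matrix.sub_mul, Matrix.one_mul, Matrix.mul_assoc, hMC, Matrix.mul_zero, sub_zero]
  have hAQG : A * (Q * G⁻¹) + F = Q * G⁻¹ := by
    rw [← Matrix.mul_assoc, hAQ, Matrix.mul_assoc Q T' G⁻¹, hT'def, Matrix.sub_mul,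
      Matrix.one_mul, Matrix.mul_assoc (1 - E) G G⁻¹, hGG, Matrix.mul_one, Matrix.mul_sub,
      hFE]
    abel
  -- the limit and the fixed point equation
  set L : Fin d → ℝ := (Q * G⁻¹).mulVec R + C.mulVec (θ 0) with hL
  have hb : η • (Mᵀ * S * D).mulVec R = F.mulVec R := by
    rw [hF, Matrix.smul_mulVec]
  have hfix : A.mulVec L + F.mulVec R = L := by
    rw [hL, Matrix.mulVec_add, Matrix.mulVec_mulVec, Matrix.mulVec_mulVec, hAC]
    have h8 : (A * (Q * G⁻¹)).mulVec R + C.mulVec (θ 0) + F.mulVec R =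
        ((A * (Q * G⁻¹)) + F).mulVec R + C.mulVec (θ 0) := by
      rw [Matrix.add_mulVec]
      exact add_right_comm ((A * (Q * G⁻¹)).mulVec R) (C.mulVec (θ 0)) (F.mulVec R)
    rw [h8, hAQG]
  clear_value L
  set v : Fin d → ℝ := θ 0 - L with hv
  clear_value v
  have hθn : ∀ n : ℕ, θ n = (A ^ n).mulVec v + L := by
    intro n
    induction n with
    | zero => rw [pow_zero, Matrix.one_mulVec, hv, sub_add_cancel]
    | succ n ih =>
      rw [hrec n, ih, hb, Matrix.mulVec_add, Matrix.mulVec_mulVec, ← pow_succ',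
        add_assoc, hfix]
  -- v lies in the row space of M
  have h1QM_Q : (1 - Q * M) * Q = 0 := by
    rw [Matrix.sub_mul, Matrix.one_mul, Matrix.mul_assoc, h1, Matrix.mul_one, sub_self]
  have hQMidem : Q * M * (Q * M) = Q * M := by
    rw [Matrix.mul_assoc, ← Matrix.mul_assoc M Q M, h1, Matrix.one_mul]
  have h1QM_C : (1 - Q * M) * C = 1 - Q * M := by
    rw [hC, Matrix.mul_add]
    have p1 : (1 - Q * M) * (1 - Q * M) = 1 - Q * M := by
      have h9 : ((1 : Matrix (Fin d) (Fin d) ℝ) - Q * M) * (1 - Q * M) =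
          1 - Q * M - Q * M + Q * M * (Q * M) := by noncomm_ring
      rw [h9, hQMidem]
      abel
    have p2 : (1 - Q * M) * (Q * G⁻¹ * (γ • (N * (1 - Q * M)))) = 0 := by
      rw [← Matrix.mul_assoc (1 - Q * M) (Q * G⁻¹) _, ← Matrix.mul_assoc (1 - Q * M) Q G⁻¹,
        h1QM_Q, Matrix.zero_mul, Matrix.zero_mul]
    rw [p1, p2, add_zero]
  have hvQ : v = Q.mulVec (M.mulVec v) := by
    have h8 : (1 - Q * M).mulVec L = (1 - Q * M).mulVec (θ 0) := by
      rw [hL, Matrix.mulVec_add, Matrix.mulVec_mulVec, Matrix.mulVec_mulVec,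
        ← Matrix.mul_assoc, h1QM_Q, Matrix.zero_mul, Matrix.zero_mulVec, zero_add, h1QM_C]
    have h9 : (1 - Q * M).mulVec v = 0 := by
      rw [hv, Matrix.mulVec_sub, h8, sub_self]
    rw [Matrix.sub_mulVec, Matrix.one_mulVec] at h9
    rw [Matrix.mulVec_mulVec]
    exact sub_eq_zero.mp h9
  set u : Fin k → ℝ := M.mulVec v with hu
  clear_value u
  have key : ∀ n : ℕ, θ n = (Q * G⁻¹).mulVec ((T'' ^ n).mulVec (G.mulVec u)) + L := by
    intro n
    rw [hθn n]
    congr 1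
    conv_lhs => rw [hvQ]
    rw [Matrix.mulVec_mulVec, hAnQ n, hT'n n]
    conv_rhs => rw [Matrix.mulVec_mulVec, Matrix.mulVec_mulVec]
    congr 1
    simp only [Matrix.mul_assoc]
  -- coordinatewise convergence
  have hcoord : ∀ l : Fin d,
      Tendsto (fun n : ℕ => ((Q * G⁻¹).mulVec ((T'' ^ n).mulVec (G.mulVec u))) l)
        atTop (𝓝 0) := by
    intro l
    have hexp : ∀ n : ℕ, ((Q * G⁻¹).mulVec ((T'' ^ n).mulVec (G.mulVec u))) l =
        ∑ a : Fin k, ∑ b : Fin k,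
          (Q * G⁻¹) l a * ((T'' ^ n) a b * (G.mulVec u) b) := by
      intro n
      simp [Matrix.mulVec, dotProduct, Finset.mul_sum]
    simp only [hexp]
    have h0 : (0 : ℝ) = ∑ a : Fin k, ∑ b : Fin k, (0 : ℝ) := by simp
    rw [h0]
    refine tendsto_finset_sum _ fun a _ => tendsto_finset_sum _ fun b _ => ?_
    have := ((aux_pow_tendsto T'' hmρ a b).mul_const ((G.mulVec u) b)).const_mul
      ((Q * G⁻¹) l a)
    simpa using this
  rw [show (Q.mulVec (G⁻¹.mulVec R) + C.mulVec (θ 0)) = L by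
    rw [hL, Matrix.mulVec_mulVec]]
  rw [tendsto_pi_nhds]
  intro l
  have hθl : ∀ n : ℕ, θ n l =
      ((Q * G⁻¹).mulVec ((T'' ^ n).mulVec (G.mulVec u))) l + L l := by
    intro n
    rw [key n]
    rfl
  simp only [hθl]
  have := (hcoord l).add_const (L l)
  simpa using this
end

section
/- Let P̂ ∈ ℝ^{k×k} be a row-stochastic matrix obtained from normalized importance sampling, M ∈ ℝ^{k×d} full row rank, and N_NIS = P̂ M restricted appropriately so that N_NIS M† = P̂. Then ‖N_NIS M†‖_∞ = 1 ≤ 1, and consequently (with 0 ≤ γ < 1, suitable η and window size m) the over-parameterized target TD iterates with NIS correction converge to θ* = M†(I − γ N_NIS M†)⁻¹ R + (I − M†M)θ₀. -/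
open Matrix Filter Topology

noncomputable def rowSumNorm {m n : ℕ} (A : Matrix (Fin m) (Fin n) ℝ) : ℝ :=
  ⨆ i, ∑ j, |A i j|

section Gelfand
attribute [local instance] Matrix.linftyOpNormedRing Matrix.linftyOpNormedAlgebra

lemma entry_tendsto_zero {k : ℕ} (G : Matrix (Fin k) (Fin k) ℝ) (h : specRad G < 1)
    (i j : Fin k) : Tendsto (fun n => (G ^ n) i j) atTop (𝓝 0) := by
  set a : Matrix (Fin k) (Fin k) ℂ := G.map (fun x => (x : ℂ)) with ha
  haveI : CompleteSpace (Matrix (Fin k) (Fin k) ℂ) := FiniteDimensional.complete ℂ _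
  have hbdd : BddAbove ((fun z : ℂ => ‖z‖) '' spectrum ℂ a) :=
    ((spectrum.isCompact a).image continuous_norm).bddAbove
  have hρ : spectralRadius ℂ a < 1 := by
    have hle : spectralRadius ℂ a ≤ ENNReal.ofReal (specRad G) := by
      rw [spectralRadius]
      refine iSup₂_le fun z hz => ?_
      rw [← ENNReal.ofReal_coe_nnreal, coe_nnnorm]
      exact ENNReal.ofReal_le_ofReal (le_csSup hbdd ⟨z, hz, rfl⟩)
    calc spectralRadius ℂ a ≤ ENNReal.ofReal (specRad G) := hle
      _ < 1 := by rwa [← ENNReal.ofReal_one, ENNReal.ofReal_lt_ofReal_iff one_pos]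
  have hg := spectrum.pow_norm_pow_one_div_tendsto_nhds_spectralRadius a
  set ρ := (spectralRadius ℂ a).toReal with hρdef
  have h1top : spectralRadius ℂ a ≠ ⊤ := (hρ.trans ENNReal.one_lt_top).ne
  have hρ1 : ρ < 1 := by
    rw [hρdef, ← ENNReal.toReal_one]
    exact (ENNReal.toReal_lt_toReal h1top ENNReal.one_ne_top).mpr hρ
  have hgr : Tendsto (fun n : ℕ => ‖a ^ n‖ ^ (1 / (n : ℝ))) atTop (𝓝 ρ) := by
    have h2 := (ENNReal.tendsto_toReal h1top).comp hg
    simpa [Function.comp_def, ENNReal.toReal_ofReal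
      (Real.rpow_nonneg (norm_nonneg _) _)] using h2
  set r := (ρ + 1) / 2 with hrdef
  have hρ0 : 0 ≤ ρ := ENNReal.toReal_nonneg
  have hρr : ρ < r := by rw [hrdef]; linarith
  have hr1 : r < 1 := by rw [hrdef]; linarith
  have hr0 : 0 ≤ r := by rw [hrdef]; linarith
  have hev : ∀ᶠ n : ℕ in atTop, ‖a ^ n‖ ^ (1 / (n : ℝ)) < r := hgr.eventually_lt_const hρr
  have hbound : ∀ᶠ n : ℕ in atTop, ‖a ^ n‖ ≤ r ^ n := by
    filter_upwards [hev, eventually_ge_atTop 1] with n hn hn1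
    have hnne : (n : ℝ) ≠ 0 := Nat.cast_ne_zero.2 (by omega)
    have hkey : ‖a ^ n‖ = (‖a ^ n‖ ^ (1 / (n : ℝ))) ^ (n : ℕ) := by
      rw [← Real.rpow_natCast (‖a ^ n‖ ^ (1 / (n : ℝ))) n, ← Real.rpow_mul (norm_nonneg _),
        one_div, inv_mul_cancel₀ hnne, Real.rpow_one]
    rw [hkey]
    exact pow_le_pow_left₀ (Real.rpow_nonneg (norm_nonneg _) _) hn.le n
  have hentry : ∀ n : ℕ, ‖(G ^ n) i j‖ ≤ ‖a ^ n‖ := by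
    intro n
    have hmap : a ^ n = (G ^ n).map (fun x => (x : ℂ)) := by
      rw [ha]
      have h3 : (Complex.ofRealHom.mapMatrix (G ^ n) : Matrix (Fin k) (Fin k) ℂ) =
          Complex.ofRealHom.mapMatrix G ^ n := map_pow _ _ _
      exact h3.symm
    have h1 : ‖(a ^ n) i j‖₊ ≤ ‖a ^ n‖₊ := by
      rw [Matrix.linfty_opNNNorm_def]
      exact le_trans (Finset.single_le_sum (f := fun j' => ‖(a ^ n) i j'‖₊)
        (fun _ _ => zero_le) (Finset.mem_univ j))
        (Finset.le_sup (f := fun i' => ∑ j' : Fin k, ‖(a ^ n) i' j'‖₊) (Finset.mem_univ i))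
    have h2 : ‖(a ^ n) i j‖ ≤ ‖a ^ n‖ := h1
    calc ‖(G ^ n) i j‖ = ‖(a ^ n) i j‖ := by
          rw [hmap]; simp [Matrix.map_apply, Complex.norm_real]
      _ ≤ ‖a ^ n‖ := h2
  exact squeeze_zero_norm' (hbound.mono fun n hn => le_trans (hentry n) hn)
    (tendsto_pow_atTop_nhds_zero_of_lt_one hr0 hr1)

end Gelfand

lemma det_smul_one_add {k : ℕ} (w : ℂ) (A B : Matrix (Fin k) (Fin k) ℂ) :
    (w • 1 + A * B).det = (w • 1 + B * A).det := by
  by_cases hw : w = 0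
  · simp [hw, Matrix.det_mul, mul_comm]
  · have h1 : w • (1 + (w⁻¹ • A) * B) = w • (1 : Matrix (Fin k) (Fin k) ℂ) + A * B := by
      rw [Matrix.smul_mul, smul_add, smul_smul, mul_inv_cancel₀ hw, one_smul]
    have h2 : w • (1 + B * (w⁻¹ • A)) = w • (1 : Matrix (Fin k) (Fin k) ℂ) + B * A := by
      rw [Matrix.mul_smul, smul_add, smul_smul, mul_inv_cancel₀ hw, one_smul]
    rw [← h1, ← h2, Matrix.det_smul, Matrix.det_smul, Matrix.det_one_add_mul_comm]

lemma map_one_sub_mul {k : ℕ} (A B : Matrix (Fin k) (Fin k) ℝ) :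
    ((1 - A * B : Matrix (Fin k) (Fin k) ℝ).map fun x => (x : ℂ)) =
      1 - (A.map fun x => (x : ℂ)) * (B.map fun x => (x : ℂ)) := by
  have h : ∀ C : Matrix (Fin k) (Fin k) ℝ, C.map (fun x => (x : ℂ)) =
      Complex.ofRealHom.mapMatrix C := fun _ => rfl
  rw [h, h, h, map_sub, _root_.map_one, _root_.map_mul]

lemma specRad_one_sub_mul {k : ℕ} (A B : Matrix (Fin k) (Fin k) ℝ) :
    specRad (1 - A * B) = specRad (1 - B * A) := by
  unfold specRad
  set A' := A.map fun x => (x : ℂ)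
  set B' := B.map fun x => (x : ℂ)
  have hs : spectrum ℂ (1 - A' * B') = spectrum ℂ (1 - B' * A') := by
    ext z
    have key : ∀ C D : Matrix (Fin k) (Fin k) ℂ,
        algebraMap ℂ (Matrix (Fin k) (Fin k) ℂ) z - (1 - C * D) = (z - 1) • 1 + C * D := by
      intro C D
      rw [Algebra.algebraMap_eq_smul_one, sub_smul, one_smul]
      abel
    simp only [spectrum.mem_iff, key, Matrix.isUnit_iff_isUnit_det, isUnit_iff_ne_zero,
      det_smul_one_add (z - 1) A' B']
  rw [map_one_sub_mul, map_one_sub_mul, hs]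

theorem stmt14 {k d : ℕ} [NeZero k] (M N : Matrix (Fin k) (Fin d) ℝ)
    (Phat : Matrix (Fin k) (Fin k) ℝ)
    (hP0 : ∀ i j, 0 ≤ Phat i j) (hP1 : ∀ i, ∑ j, Phat i j = 1)
    (hM : IsUnit (M * Mᵀ))
    (hN : N = Phat * M)
    (D : Matrix (Fin k) (Fin k) ℝ)
    (hDdiag : ∀ i j, i ≠ j → D i j = 0) (hDpos : ∀ i, 0 < D i i)
    (γ : ℝ) (hγ0 : 0 ≤ γ) (hγ1 : γ < 1)
    (η : ℝ) (hη : 0 < η) (hρ : η * specRad (M * Mᵀ * D) < 1)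
    (m : ℕ) (hm : 1 ≤ m)
    (hmρ : specRad (γ • (N * pinv M) +
      (1 - γ • (N * pinv M)) * (1 - η • (M * Mᵀ * D)) ^ m) < 1)
    (R : Fin k → ℝ) (θ : ℕ → Fin d → ℝ)
    (hrec : ∀ n : ℕ, θ (n + 1) =
      (1 - η • (Mᵀ * (∑ i ∈ Finset.range m, (1 - η • (D * M * Mᵀ)) ^ i) * D *
        (M - γ • N))).mulVec (θ n) +
      η • (Mᵀ * (∑ i ∈ Finset.range m, (1 - η • (D * M * Mᵀ)) ^ i) * D).mulVec R) :
    N * pinv M = Phat ∧ rowSumNorm (N * pinv M) = 1 ∧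
    Tendsto θ atTop (nhds
      ((pinv M).mulVec ((1 - γ • (N * pinv M))⁻¹.mulVec R) +
        (1 - pinv M * M).mulVec (θ 0))) := by
  classical
  have hMMdet : IsUnit (M * Mᵀ).det := (Matrix.isUnit_iff_isUnit_det _).mp hM
  have key1 : M * pinv M = 1 := by
    rw [pinv, ← Matrix.mul_assoc]
    exact Matrix.mul_nonsing_inv _ hMMdet
  have part1 : N * pinv M = Phat := by rw [hN, Matrix.mul_assoc, key1, Matrix.mul_one]
  refine ⟨part1, ?_, ?_⟩
  · rw [part1, rowSumNorm]
    have h1 : ∀ i : Fin k, ∑ j, |Phat i j| = 1 := fun i => by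
      rw [← hP1 i]; exact Finset.sum_congr rfl fun j _ => abs_of_nonneg (hP0 i j)
    haveI : Nonempty (Fin k) := Fin.pos_iff_nonempty.mp (Nat.pos_of_ne_zero (NeZero.ne k))
    rw [iSup_congr h1]
    exact ciSup_const
  · -- part 3
    set Q := pinv M with hQdef
    set E : Matrix (Fin k) (Fin k) ℝ := (1 - η • (M * Mᵀ * D)) ^ m with hEdef
    set S : Matrix (Fin k) (Fin k) ℝ :=
      ∑ i ∈ Finset.range m, (1 - η • (D * M * Mᵀ)) ^ i with hSdef
    set F : Matrix (Fin k) (Fin k) ℝ := (1 - η • (D * M * Mᵀ)) ^ m with hFdef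
    set G : Matrix (Fin k) (Fin k) ℝ := 1 - (1 - E) * (1 - γ • Phat) with hGdef
    have key1' : ∀ {p : ℕ} (Z : Matrix (Fin k) (Fin p) ℝ), M * (Q * Z) = Z := by
      intro p Z; rw [← Matrix.mul_assoc, key1, Matrix.one_mul]
    have comm : ∀ i : ℕ, (M * Mᵀ) * (1 - η • (D * M * Mᵀ)) ^ i
        = (1 - η • (M * Mᵀ * D)) ^ i * (M * Mᵀ) := by
      intro i
      induction i with
      | zero => simp
      | succ n ih =>
        have hstep : (M * Mᵀ) * (1 - η • (D * M * Mᵀ))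
            = (1 - η • (M * Mᵀ * D)) * (M * Mᵀ) := by
          have h0 : (M * Mᵀ) * (D * M * Mᵀ) = (M * Mᵀ * D) * (M * Mᵀ) := by
            simp [Matrix.mul_assoc]
          rw [Matrix.mul_sub, Matrix.sub_mul, Matrix.mul_one, Matrix.one_mul,
            Matrix.mul_smul, Matrix.smul_mul, h0]
        rw [pow_succ, pow_succ, ← Matrix.mul_assoc, ih, Matrix.mul_assoc, hstep,
          ← Matrix.mul_assoc]
    have hMMF : (M * Mᵀ) * F = E * (M * Mᵀ) := comm m
    have hTel : S * (η • (D * M * Mᵀ)) = 1 - F := by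
      have h := geom_sum_mul (1 - η • (D * M * Mᵀ)) m
      have h2 : (1 - η • (D * M * Mᵀ)) - 1 = -(η • (D * M * Mᵀ)) := by abel
      rw [h2, mul_neg] at h
      have h3 := congrArg Neg.neg h
      rw [neg_neg, neg_sub] at h3
      exact h3
    set T : Matrix (Fin d) (Fin k) ℝ := η • (Mᵀ * S * D) with hTdef
    have hTMM : T * (M * Mᵀ) = Mᵀ * (1 - F) := by
      have h1 : T * (M * Mᵀ) = Mᵀ * (S * (η • (D * M * Mᵀ))) := by
        rw [hTdef]
        simp only [Matrix.smul_mul, Matrix.mul_smul, Matrix.mul_assoc]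
      rw [h1, hTel]
    have hTQ : T = Q * (1 - E) := by
      have hswap : (1 - F) * (M * Mᵀ)⁻¹ = (M * Mᵀ)⁻¹ * (1 - E) := by
        have h4 : (M * Mᵀ) * (1 - F) = (1 - E) * (M * Mᵀ) := by
          rw [Matrix.mul_sub, Matrix.sub_mul, Matrix.mul_one, Matrix.one_mul, hMMF]
        calc (1 - F) * (M * Mᵀ)⁻¹
            = (M * Mᵀ)⁻¹ * ((M * Mᵀ) * (1 - F)) * (M * Mᵀ)⁻¹ := by
              rw [Matrix.nonsing_inv_mul_cancel_left _ _ hMMdet]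
          _ = (M * Mᵀ)⁻¹ * (1 - E) := by
              rw [h4, Matrix.mul_assoc ((M * Mᵀ)⁻¹),
                Matrix.mul_nonsing_inv_cancel_right _ _ hMMdet]
      calc T = T * ((M * Mᵀ) * (M * Mᵀ)⁻¹) := by
            rw [Matrix.mul_nonsing_inv _ hMMdet, Matrix.mul_one]
        _ = (T * (M * Mᵀ)) * (M * Mᵀ)⁻¹ := by rw [← Matrix.mul_assoc]
        _ = Mᵀ * ((1 - F) * (M * Mᵀ)⁻¹) := by rw [hTMM, Matrix.mul_assoc]
        _ = Mᵀ * ((M * Mᵀ)⁻¹ * (1 - E)) := by rw [hswap]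
        _ = Q * (1 - E) := by rw [hQdef, pinv, Matrix.mul_assoc]
    have hfact : (1 : Matrix (Fin k) (Fin k) ℝ) - G = (1 - E) * (1 - γ • Phat) := by
      rw [hGdef, sub_sub_cancel]
    have h5 : M - γ • N = (1 - γ • Phat) * M := by
      rw [hN, Matrix.sub_mul, Matrix.one_mul, Matrix.smul_mul]
    have hA1 : η • (Mᵀ * S * D * (M - γ • N)) = Q * ((1 - G) * M) := by
      calc η • (Mᵀ * S * D * (M - γ • N)) = T * ((1 - γ • Phat) * M) := by
            rw [h5, hTdef, Matrix.smul_mul]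
        _ = Q * ((1 - G) * M) := by
            rw [hTQ, hfact]; simp [Matrix.mul_assoc]
    have hb1 : η • (Mᵀ * S * D).mulVec R = (Q * (1 - E)).mulVec R := by
      rw [← Matrix.smul_mulVec, ← hTdef, hTQ]
    have hrec' : ∀ n, θ (n + 1)
        = (1 - Q * ((1 - G) * M)).mulVec (θ n) + (Q * (1 - E)).mulVec R := by
      intro n; rw [hrec n, hA1, hb1]
    have expand : ∀ X Y : Matrix (Fin k) (Fin k) ℝ,
        (1 - Q * (X * M)) * (1 - Q * (Y * M)) = 1 - Q * ((X + Y - X * Y) * M) := by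
      intro X Y
      simp only [Matrix.mul_sub, Matrix.sub_mul, Matrix.mul_add, Matrix.add_mul,
        Matrix.mul_one, Matrix.one_mul, Matrix.mul_assoc, key1']
      abel
    have expandB : ∀ X W : Matrix (Fin k) (Fin k) ℝ,
        (1 - Q * (X * M)) * (Q * W) = Q * W - Q * (X * W) := by
      intro X W
      simp only [Matrix.sub_mul, Matrix.one_mul, Matrix.mul_assoc, key1']
    have closed : ∀ n, θ n = (1 - Q * ((1 - G ^ n) * M)).mulVec (θ 0)
        + (Q * ((∑ i ∈ Finset.range n, G ^ i) * (1 - E))).mulVec R := by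
      intro n
      induction n with
      | zero =>
        simp [Matrix.zero_mul, Matrix.mul_zero, Matrix.one_mulVec, Matrix.zero_mulVec]
      | succ n ih =>
        have mA : (1 - Q * ((1 - G) * M)) * (1 - Q * ((1 - G ^ n) * M))
            = 1 - Q * ((1 - G ^ (n + 1)) * M) := by
          rw [expand]
          have h7 : (1 - G) + (1 - G ^ n) - (1 - G) * (1 - G ^ n) = 1 - G ^ (n + 1) := by
            simp only [mul_sub, sub_mul, mul_one, one_mul, pow_succ']
            abel
          rw [h7]
        have mB : (1 - Q * ((1 - G) * M)) * (Q * ((∑ i ∈ Finset.range n, G ^ i) * (1 - E)))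
            + Q * (1 - E)
            = Q * ((∑ i ∈ Finset.range (n + 1), G ^ i) * (1 - E)) := by
          rw [expandB, geom_sum_succ]
          simp only [Matrix.mul_sub, Matrix.sub_mul, Matrix.mul_add, Matrix.add_mul,
            Matrix.one_mul, Matrix.mul_one, Matrix.mul_assoc]
          abel
        rw [hrec' n, ih, Matrix.mulVec_add, Matrix.mulVec_mulVec, Matrix.mulVec_mulVec,
          add_assoc, ← Matrix.add_mulVec, mA, mB]
    have hGrad : specRad G < 1 := by
      have h6 : γ • Phat + (1 - γ • Phat) * E
          = 1 - (1 - γ • Phat) * (1 - E) := by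
        simp only [mul_sub, sub_mul, mul_one, one_mul]
        abel
      rw [part1, h6] at hmρ
      rw [hGdef, specRad_one_sub_mul]
      exact hmρ
    have hGten : Tendsto (fun n => G ^ n) atTop (𝓝 (0 : Matrix (Fin k) (Fin k) ℝ)) := by
      refine tendsto_pi_nhds.mpr ?_
      intro i
      refine tendsto_pi_nhds.mpr ?_
      intro j
      simpa using entry_tendsto_zero G hGrad i j
    have geom : ∀ n : ℕ, (1 - G) * ∑ i ∈ Finset.range n, G ^ i = 1 - G ^ n := by
      intro n
      have h := mul_geom_sum G n
      have h2 := congrArg Neg.neg h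
      rw [← neg_mul, neg_sub, neg_sub] at h2
      exact h2
    have hdet : IsUnit ((1 : Matrix (Fin k) (Fin k) ℝ) - G).det := by
      rw [isUnit_iff_ne_zero]
      intro hzero
      have hz : ∀ n : ℕ, ((1 : Matrix (Fin k) (Fin k) ℝ) - G ^ n).det = 0 := fun n => by
        rw [← geom n, Matrix.det_mul, hzero, zero_mul]
      have hcont : Continuous fun X : Matrix (Fin k) (Fin k) ℝ => (1 - X).det :=
        (continuous_const.sub continuous_id).matrix_det
      have hlim : Tendsto (fun n => ((1 : Matrix (Fin k) (Fin k) ℝ) - G ^ n).det) atTop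
          (𝓝 ((1 - (0 : Matrix (Fin k) (Fin k) ℝ)).det)) := (hcont.tendsto 0).comp hGten
      rw [sub_zero, Matrix.det_one] at hlim
      have hlim' : Tendsto (fun _ : ℕ => (0 : ℝ)) atTop (𝓝 1) :=
        hlim.congr fun n => hz n
      have h01 : (0 : ℝ) = 1 := tendsto_nhds_unique tendsto_const_nhds hlim'
      norm_num at h01
    have hsum : Tendsto (fun n => ∑ i ∈ Finset.range n, G ^ i) atTop
        (𝓝 ((1 - G)⁻¹)) := by
      have hrepr : ∀ n, ∑ i ∈ Finset.range n, G ^ i = (1 - G)⁻¹ * (1 - G ^ n) := fun n => by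
        rw [← geom n, Matrix.nonsing_inv_mul_cancel_left _ _ hdet]
      have hcont : Continuous fun X : Matrix (Fin k) (Fin k) ℝ => (1 - G)⁻¹ * (1 - X) :=
        continuous_const.matrix_mul (continuous_const.sub continuous_id)
      have h8 := (hcont.tendsto 0).comp hGten
      simp only [Function.comp_def] at h8
      rw [sub_zero, Matrix.mul_one] at h8
      exact h8.congr fun n => (hrepr n).symm
    have hdetE : IsUnit ((1 : Matrix (Fin k) (Fin k) ℝ) - E).det := by
      have h9 := hdet
      rw [hfact, Matrix.det_mul] at h9
      exact isUnit_of_mul_isUnit_left h9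
    have hQinv : Q * ((1 - G)⁻¹ * (1 - E)) = Q * (1 - γ • Phat)⁻¹ := by
      rw [hfact, Matrix.mul_inv_rev, Matrix.mul_assoc, Matrix.nonsing_inv_mul _ hdetE,
        Matrix.mul_one]
    have hFcont : Continuous fun p : Matrix (Fin k) (Fin k) ℝ × Matrix (Fin k) (Fin k) ℝ =>
        (1 - Q * ((1 - p.1) * M)).mulVec (θ 0) + (Q * (p.2 * (1 - E))).mulVec R := by
      apply Continuous.add
      · exact (continuous_const.sub (continuous_const.matrix_mul
          ((continuous_const.sub continuous_fst).matrix_mul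
            continuous_const))).matrix_mulVec continuous_const
      · exact (continuous_const.matrix_mul
          (continuous_snd.matrix_mul continuous_const)).matrix_mulVec continuous_const
    have hpair : Tendsto (fun n => (G ^ n, ∑ i ∈ Finset.range n, G ^ i)) atTop
        (𝓝 ((0 : Matrix (Fin k) (Fin k) ℝ), (1 - G)⁻¹)) := hGten.prodMk_nhds hsum
    have htot := (hFcont.tendsto _).comp hpair
    simp only [Function.comp_def] at htot
    have hth : Tendsto θ atTop
        (𝓝 ((1 - Q * ((1 - (0 : Matrix (Fin k) (Fin k) ℝ)) * M)).mulVec (θ 0)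
          + (Q * ((1 - G)⁻¹ * (1 - E))).mulVec R)) := htot.congr fun n => (closed n).symm
    rw [sub_zero, Matrix.one_mul, hQinv] at hth
    have hfin : Q.mulVec ((1 - γ • Phat)⁻¹.mulVec R) + (1 - Q * M).mulVec (θ 0)
        = (1 - Q * M).mulVec (θ 0) + (Q * (1 - γ • Phat)⁻¹).mulVec R := by
      rw [Matrix.mulVec_mulVec, add_comm]
    rw [part1, hfin]
    exact hth
end

section
/- Suppose feature vectors are orthonormal so that M Mᵀ = I_k, N M† = H P̂ Hᵀ where H P̂ Hᵀ is a substochastic matrix, D_k = (1/k) I_k (uniform empirical distribution), and 0 ≤ γ < 1. Then for any 0 < η ≤ k, the spectral radius of I − η (M − γN) Mᵀ D_k is strictly less than 1. -/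
open Matrix

attribute [local instance] Matrix.linftyOpNormedRing Matrix.linftyOpNormedAlgebra

theorem stmt17 {k d : ℕ} (hk : 0 < k) (M N : Matrix (Fin k) (Fin d) ℝ)
    (horth : M * Mᵀ = 1)
    -- N M† is a substochastic matrix (= H P̂ Hᵀ)
    (hsub0 : ∀ i j, 0 ≤ (N * pinv M) i j)
    (hsub1 : ∀ i, ∑ j, (N * pinv M) i j ≤ 1)
    (γ : ℝ) (hγ0 : 0 ≤ γ) (hγ1 : γ < 1)
    (η : ℝ) (hη0 : 0 < η) (hηk : η ≤ (k : ℝ)) :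
    specRad (1 - η • ((M - γ • N) * Mᵀ * ((k : ℝ)⁻¹ • 1))) < 1 := by
  haveI : Nonempty (Fin k) := ⟨⟨0, hk⟩⟩
  have hkp : (0:ℝ) < k := by exact_mod_cast hk
  set S : Matrix (Fin k) (Fin k) ℝ := N * Mᵀ with hSdef
  have hpinv : pinv M = Mᵀ := by rw [pinv, horth, inv_one, Matrix.mul_one]
  have hS0 : ∀ i j, 0 ≤ S i j := by rw [hSdef, ← hpinv]; exact hsub0
  have hS1 : ∀ i, ∑ j, S i j ≤ 1 := by rw [hSdef, ← hpinv]; exact hsub1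
  have hA : (1 - η • ((M - γ • N) * Mᵀ * ((k : ℝ)⁻¹ • 1))) =
      (1 - η/k) • (1 : Matrix (Fin k) (Fin k) ℝ) + (η*γ/k) • S := by
    rw [Matrix.mul_smul, Matrix.mul_one, Matrix.sub_mul, Matrix.smul_mul, horth, ← hSdef]
    rw [div_eq_mul_inv, div_eq_mul_inv]
    module
  rw [hA]
  set c : ℝ := (1 - η/k) + η*γ/k with hc
  have hd0 : 0 ≤ 1 - η/k := by
    have : η/k ≤ 1 := (div_le_one hkp).mpr hηk
    linarith
  have hc0 : 0 ≤ c := by positivity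
  have hc1 : c < 1 := by
    have h1 : η*γ/k < η/k := (div_lt_div_iff_of_pos_right hkp).mpr (by nlinarith)
    rw [hc]; linarith
  set B := ((1 - η/k) • (1 : Matrix (Fin k) (Fin k) ℝ) + (η*γ/k) • S).map
    (fun x => (x : ℂ)) with hB
  have hnorm : ‖B‖ ≤ c := by
    rw [Matrix.linfty_opNorm_def]
    have : (Finset.univ.sup fun i => ∑ j, ‖B i j‖₊) ≤ c.toNNReal := by
      apply Finset.sup_le
      intro i _
      rw [← NNReal.coe_le_coe, NNReal.coe_sum, Real.coe_toNNReal _ hc0]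
      have hentry : ∀ j, (‖B i j‖₊ : ℝ) =
          (1 - η/k) * (1 : Matrix (Fin k) (Fin k) ℝ) i j + (η*γ/k) * S i j := by
        intro j
        have : B i j = (((1 - η/k) * (1 : Matrix (Fin k) (Fin k) ℝ) i j
            + (η*γ/k) * S i j : ℝ) : ℂ) := by
          simp [hB, Matrix.map_apply, Matrix.add_apply, Matrix.smul_apply, smul_eq_mul]
        rw [coe_nnnorm, this, Complex.norm_real, Real.norm_eq_abs, abs_of_nonneg]
        have := hS0 i j
        have hone : (0:ℝ) ≤ (1 : Matrix (Fin k) (Fin k) ℝ) i j := by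
          rw [Matrix.one_apply]; split <;> norm_num
        positivity
      calc ∑ j, (‖B i j‖₊ : ℝ)
          = ∑ j, ((1 - η/k) * (1 : Matrix (Fin k) (Fin k) ℝ) i j + (η*γ/k) * S i j) := by
            exact Finset.sum_congr rfl fun j _ => hentry j
        _ = (1 - η/k) + (η*γ/k) * ∑ j, S i j := by
            rw [Finset.sum_add_distrib, ← Finset.mul_sum, ← Finset.mul_sum]
            congr 1
            simp [Matrix.one_apply, Finset.sum_ite_eq]
        _ ≤ (1 - η/k) + (η*γ/k) * 1 := by
            have : 0 ≤ η*γ/k := by positivity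
            nlinarith [hS1 i]
        _ = c := by rw [hc]; ring
    calc ((Finset.univ.sup fun i => ∑ j, ‖B i j‖₊ : NNReal) : ℝ)
        ≤ (c.toNNReal : ℝ) := NNReal.coe_le_coe.mpr this
      _ = c := Real.coe_toNNReal _ hc0
  rw [specRad]
  apply lt_of_le_of_lt _ hc1
  apply Real.sSup_le _ hc0
  rintro x ⟨μ, hμ, rfl⟩
  have := spectrum.norm_le_norm_of_mem hμ
  calc ‖μ‖ = ‖μ‖ := rfl
    _ ≤ ‖B‖ := this
    _ ≤ c := hnorm
end

section
/- Consider the two-state example with feature matrix Φ = (1, 2)ᵀ, transition matrix P = [[0,1],[0,1]], reward r = 0, discount γ > 1/2, and state distribution d = ((4γ−4)/(2γ−3), (1−2γ)/(2γ−3)). Then d is a valid probability distribution (nonnegative entries summing to 1), and Φᵀ D (I − γP) Φ = 0 where D = diag(d); hence the under-parameterized TD fixed point (Φᵀ D (I − γP) Φ)⁻¹ Φᵀ D r does not exist. -/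
open Matrix

theorem stmt18 (γ : ℝ) (hγ : 1 / 2 < γ) (hγ1 : γ < 1)
    (Φ : Matrix (Fin 2) (Fin 1) ℝ) (hΦ : Φ = !![1; 2])
    (P : Matrix (Fin 2) (Fin 2) ℝ) (hP : P = !![0, 1; 0, 1])
    (d₁ d₂ : ℝ) (hd₁ : d₁ = (4 * γ - 4) / (2 * γ - 3)) (hd₂ : d₂ = (1 - 2 * γ) / (2 * γ - 3))
    (D : Matrix (Fin 2) (Fin 2) ℝ) (hD : D = Matrix.diagonal ![d₁, d₂]) :
    0 ≤ d₁ ∧ 0 ≤ d₂ ∧ d₁ + d₂ = 1 ∧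
    Φᵀ * D * (1 - γ • P) * Φ = 0 ∧
    ¬ IsUnit (Φᵀ * D * (1 - γ • P) * Φ) := by
  have hden : 2 * γ - 3 < 0 := by linarith
  have hd1 : 0 ≤ d₁ := by
    rw [hd₁]
    rw [div_nonneg_iff]; right; constructor <;> linarith
  have hd2 : 0 ≤ d₂ := by
    rw [hd₂]
    rw [div_nonneg_iff]; right; constructor <;> linarith
  have hsum : d₁ + d₂ = 1 := by
    rw [hd₁, hd₂]
    have : 2 * γ - 3 ≠ 0 := by linarith
    field_simp
    rw [div_eq_one_iff_eq (by linarith)]; ring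
  have hzero : Φᵀ * D * (1 - γ • P) * Φ = 0 := by
    subst hΦ hP hD hd₁ hd₂
    ext i j
    fin_cases i; fin_cases j
    simp [Matrix.mul_apply, Fin.sum_univ_succ, Matrix.one_apply, Matrix.diagonal]
    have : 2 * γ - 3 ≠ 0 := by linarith
    field_simp
    ring
  refine ⟨hd1, hd2, hsum, hzero, ?_⟩
  rw [hzero]
  exact not_isUnit_zero
end
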